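/- arXiv:2507.04063 — 9 statements merged into one kernel-verified Lean document; each statement's English description precedes it below -/
import Mathlib

section
/- Let g be a nilpotent Lie algebra with bracket μ, let h be a Lie subalgebra of g of codimension 2, and let a_1, a_2 ∈ g be linearly independent elements with g = span{a_1, a_2} ⊕ h. Let y be an element of the centralizer of h in g. Define the alternating bilinear map σ by σ(a_1, a_2) = y, σ(a_1, h) = σ(a_2, h) = 0 for all h ∈ h, and σ(h, h') = 0 for all h, h' ∈ h. Then for every scalar t, the bilinear map μ_t = μ + t·σ satisfies the Jacobi identity, i.e., μ_t is a Lie bracket. -/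
open Submodule LieAlgebra in
theorem traceKey {K L : Type*} [Field K] [CharZero K] [LieRing L] [LieAlgebra K L]
    [FiniteDimensional K L] (hnilp : LieRing.IsNilpotent L)
    (H : LieSubalgebra K L) (a₁ a₂ : L)
    (hind : LinearIndependent K ![a₁, a₂])
    (hcompl : IsCompl (Submodule.span K {a₁, a₂}) H.toSubmodule)
    (h : L) (hh : h ∈ H) (p₁ p₂ q₁ q₂ : K) (h' h'' : L) (hh' : h' ∈ H) (hh'' : h'' ∈ H)
    (e1 : ⁅h, a₁⁆ = p₁ • a₁ + p₂ • a₂ + h') (e2 : ⁅h, a₂⁆ = q₁ • a₁ + q₂ • a₂ + h'') :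
    p₁ + q₂ = 0 := by
  set W : Submodule K L := Submodule.span K (Set.range ![a₁, a₂]) with hWdef
  have hWeq : W = Submodule.span K {a₁, a₂} := by
    rw [hWdef]; congr 1; simp [Matrix.range_cons, Set.pair_comm]
  rw [← hWeq] at hcompl
  have ha₁W : a₁ ∈ W := by rw [hWeq]; exact subset_span (by simp)
  have ha₂W : a₂ ∈ W := by rw [hWeq]; exact subset_span (by simp)
  set B : Module.Basis (Fin 2) K W := Module.Basis.span hind with hB
  set P : L →ₗ[K] W := W.projectionOnto H.toSubmodule hcompl with hP
  set f : W →ₗ[K] W := P ∘ₗ (ad K L h) ∘ₗ W.subtype with hf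
  have hPH : ∀ z ∈ H, P z = 0 := fun z hz =>
    Submodule.projectionOnto_apply_right hcompl ⟨z, hz⟩
  have hsub : ∀ z : L, z - ↑(P z) ∈ H.toSubmodule := by
    intro z
    have h0 : (P z : L) + (H.toSubmodule.projectionOnto W hcompl.symm z : L) = z :=
      Submodule.projection_add_projection_eq_self hcompl z
    have h1 := (eq_sub_of_add_eq' h0)
    rw [← h1]; exact Subtype.coe_prop _
  have hpow : ∀ k : ℕ, ∀ z : W, (f ^ k) z = P ((ad K L h ^ k) z) := by
    intro k; induction k with
    | zero => intro z; simp [hP, Submodule.projectionOnto_apply_left]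
    | succ n ih =>
      intro z
      rw [pow_succ', pow_succ', Module.End.mul_apply, Module.End.mul_apply, ih]
      show P ((ad K L h) ↑(P ((ad K L h ^ n) ↑z))) = P ((ad K L h) ((ad K L h ^ n) ↑z))
      set b := (ad K L h ^ n) (z : L) with hb
      have hmem : (ad K L h) (b - ↑(P b)) ∈ H := H.lie_mem hh (hsub b)
      have h2 : P ((ad K L h) b) - P ((ad K L h) ↑(P b)) = 0 := by
        rw [← map_sub, ← map_sub]; exact hPH _ hmem
      exact (eq_of_sub_eq_zero h2).symm
  have hadn : IsNilpotent (ad K L h) := by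
    haveI := hnilp; exact LieModule.isNilpotent_toEnd_of_isNilpotent K L L h
  have hfn : IsNilpotent f := by
    obtain ⟨n, hn⟩ := hadn
    refine ⟨n, ?_⟩
    ext z
    have hzz := hpow n z
    rw [hn] at hzz
    simpa using hzz
  have htr : LinearMap.trace K W f = 0 :=
    (LinearMap.isNilpotent_trace_of_isNilpotent hfn).eq_zero
  have hB0 : ((B 0 : W) : L) = a₁ := by rw [hB, Module.Basis.span_apply]; rfl
  have hB1 : ((B 1 : W) : L) = a₂ := by rw [hB, Module.Basis.span_apply]; rfl
  have hPa₁ : P a₁ = B 0 := by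
    rw [← hB0]; exact Submodule.projectionOnto_apply_left hcompl (B 0)
  have hPa₂ : P a₂ = B 1 := by
    rw [← hB1]; exact Submodule.projectionOnto_apply_left hcompl (B 1)
  have hfB0 : f (B 0) = p₁ • B 0 + p₂ • B 1 := by
    show P ((ad K L h) ↑(B 0)) = _
    rw [hB0]
    show P ⁅h, a₁⁆ = _
    rw [e1, map_add, map_add, map_smul, map_smul, hPa₁, hPa₂, hPH h' hh', add_zero]
  have hfB1 : f (B 1) = q₁ • B 0 + q₂ • B 1 := by
    show P ((ad K L h) ↑(B 1)) = _
    rw [hB1]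
    show P ⁅h, a₂⁆ = _
    rw [e2, map_add, map_add, map_smul, map_smul, hPa₁, hPa₂, hPH h'' hh'', add_zero]
  have htr2 : LinearMap.trace K W f = p₁ + q₂ := by
    rw [LinearMap.trace_eq_matrix_trace K B f, Matrix.trace_fin_two]
    rw [LinearMap.toMatrix_apply, LinearMap.toMatrix_apply, hfB0, hfB1]
    simp [Module.Basis.repr_self]
  rw [htr] at htr2
  exact htr2.symm



/-- The deformed bracket `μ_t(x,y) = ⁅x,y⁆ + t • σ x y`. -/
def deformedBracket {K L : Type*} [Field K] [LieRing L] [LieAlgebra K L]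
    (σ : L →ₗ[K] L →ₗ[K] L) (t : K) (x y : L) : L :=
  ⁅x, y⁆ + t • σ x y

/-- Linear deformation theorem: for `g` nilpotent, `h` a codimension-2 subalgebra,
`g = span{a₁,a₂} ⊕ h`, and `y` centralizing `h`, the bracket `μ_t = μ + t σ` (where
`σ(a₁,a₂) = y`, `σ(a_i,h) = 0`, `σ(h,h') = 0`) satisfies the Jacobi identity for all `t`. -/
theorem linear_deformation_is_lie_bracket
    {K L : Type*} [Field K] [CharZero K] [LieRing L] [LieAlgebra K L]
    [FiniteDimensional K L] (hnilp : LieRing.IsNilpotent L)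
    (H : LieSubalgebra K L) (a₁ a₂ : L)
    (hind : LinearIndependent K ![a₁, a₂])
    (hcompl : IsCompl (Submodule.span K {a₁, a₂}) H.toSubmodule)
    (y : L) (hy : ∀ x ∈ H, ⁅y, x⁆ = 0)
    (σ : L →ₗ[K] L →ₗ[K] L) (halt : ∀ x, σ x x = 0)
    (hσa : σ a₁ a₂ = y)
    (hσ1h : ∀ x ∈ H, σ a₁ x = 0) (hσ2h : ∀ x ∈ H, σ a₂ x = 0)
    (hσhh : ∀ x ∈ H, ∀ x' ∈ H, σ x x' = 0) :
    ∀ t : K, ∀ x y' z : L,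
      deformedBracket σ t x (deformedBracket σ t y' z) +
      deformedBracket σ t y' (deformedBracket σ t z x) +
      deformedBracket σ t z (deformedBracket σ t x y') = 0 := by
  -- skew-symmetry of σ
  have hskew : ∀ p q : L, σ p q = - σ q p := by
    intro p q
    have h0 := halt (p + q)
    simp only [map_add, LinearMap.add_apply, halt, zero_add, add_zero] at h0
    exact eq_neg_of_add_eq_zero_right h0
  -- decomposition of any element
  have hdec : ∀ xx : L, ∃ c₁ c₂ : K, ∃ hh, hh ∈ H ∧ xx = c₁ • a₁ + c₂ • a₂ + hh := by
    intro xx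
    have hx : xx ∈ (Submodule.span K {a₁, a₂} ⊔ H.toSubmodule) := by
      rw [hcompl.sup_eq_top]; trivial
    obtain ⟨s, hs, hh, hhm, heq⟩ := Submodule.mem_sup.mp hx
    obtain ⟨c₁, c₂, hc⟩ := Submodule.mem_span_pair.mp hs
    exact ⟨c₁, c₂, hh, hhm, by rw [← heq, ← hc]⟩
  -- σ vanishes when first argument is in H
  have hσh : ∀ hh ∈ H, ∀ b : L, σ hh b = 0 := by
    intro hh hm b
    obtain ⟨c₁, c₂, p, hp, rfl⟩ := hdec b
    have h1 : σ hh a₁ = 0 := by rw [hskew, hσ1h hh hm, neg_zero]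
    have h2 : σ hh a₂ = 0 := by rw [hskew, hσ2h hh hm, neg_zero]
    simp [map_add, map_smul, h1, h2, hσhh hh hm p hp]
  have hσbh : ∀ b : L, ∀ hh ∈ H, σ b hh = 0 := by
    intro b hh hm; rw [hskew, hσh hh hm, neg_zero]
  have hσ21 : σ a₂ a₁ = -y := by rw [hskew, hσa]
  -- σ value on decomposed elements
  have hσval : ∀ (c₁ c₂ d₁ d₂ : K) (p q : L), p ∈ H → q ∈ H →
      σ (c₁ • a₁ + c₂ • a₂ + p) (d₁ • a₁ + d₂ • a₂ + q) = (c₁ * d₂ - c₂ * d₁) • y := by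
    intro c₁ c₂ d₁ d₂ p q hp hq
    simp only [map_add, map_smul, LinearMap.add_apply, LinearMap.smul_apply,
      halt, hσa, hσ21, hσ1h q hq, hσ2h q hq, hσh p hp, hσbh a₁ q hq, hσbh a₂ q hq,
      hσbh p q hq, smul_zero, add_zero, zero_add]
    module
  -- σ of a decomposed element applied to anything
  have hσdec : ∀ (c₁ c₂ : K) (p : L), p ∈ H → ∀ b : L,
      σ (c₁ • a₁ + c₂ • a₂ + p) b = c₁ • σ a₁ b + c₂ • σ a₂ b := by
    intro c₁ c₂ p hp b
    simp [map_add, map_smul, hσh p hp]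
  -- bracket expansion
  have hbr : ∀ (c₁ c₂ d₁ d₂ : K) (p q : L),
      ⁅c₁ • a₁ + c₂ • a₂ + p, d₁ • a₁ + d₂ • a₂ + q⁆ =
        (c₁ * d₂ - c₂ * d₁) • ⁅a₁, a₂⁆ + c₁ • ⁅a₁, q⁆ + c₂ • ⁅a₂, q⁆
          - d₁ • ⁅a₁, p⁆ - d₂ • ⁅a₂, p⁆ + ⁅p, q⁆ := by
    intro c₁ c₂ d₁ d₂ p q
    have h21 : ⁅a₂, a₁⁆ = -⁅a₁, a₂⁆ := by rw [← lie_skew]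
    have hpa₁ : ⁅p, a₁⁆ = -⁅a₁, p⁆ := by rw [← lie_skew]
    have hpa₂ : ⁅p, a₂⁆ = -⁅a₂, p⁆ := by rw [← lie_skew]
    simp only [lie_add, add_lie, smul_lie, lie_smul, lie_self, smul_zero, add_zero,
      zero_add, h21, hpa₁, hpa₂]
    module
  -- the key trace identity
  have hkey : ∀ hh ∈ H, σ a₁ ⁅a₂, hh⁆ = σ a₂ ⁅a₁, hh⁆ := by
    intro hh hm
    obtain ⟨p₁, p₂, h', hh', e1⟩ := hdec ⁅hh, a₁⁆
    obtain ⟨q₁, q₂, h'', hh'', e2⟩ := hdec ⁅hh, a₂⁆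
    have htr := traceKey hnilp H a₁ a₂ hind hcompl hh hm p₁ p₂ q₁ q₂ h' h'' hh' hh'' e1 e2
    have l1 : ⁅a₂, hh⁆ = -(q₁ • a₁ + q₂ • a₂ + h'') := by rw [← e2, lie_skew]
    have l2 : ⁅a₁, hh⁆ = -(p₁ • a₁ + p₂ • a₂ + h') := by rw [← e1, lie_skew]
    rw [l1, l2, map_neg, map_neg]
    simp only [map_add, map_smul, halt, hσa, hσ21, hσ1h h'' hh'', hσ2h h' hh',
      smul_zero, add_zero, zero_add]
    have hq : q₂ = -p₁ := eq_neg_of_add_eq_zero_right htr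
    rw [hq]
    module
  intro t u v w
  obtain ⟨c₁, c₂, h₁, hm₁, rfl⟩ := hdec u
  obtain ⟨d₁, d₂, h₂, hm₂, rfl⟩ := hdec v
  obtain ⟨e₁, e₂, h₃, hm₃, rfl⟩ := hdec w
  have hsplit : ∀ p q r : L, deformedBracket σ t p (deformedBracket σ t q r) =
      ⁅p, ⁅q, r⁆⁆ + t • σ p ⁅q, r⁆ + t • ⁅p, σ q r⁆ + (t * t) • σ p (σ q r) := by
    intro p q r
    simp only [deformedBracket, lie_add, map_add, map_smul, lie_smul, smul_add, smul_smul]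
    module
  have hy₁ : ⁅h₁, y⁆ = 0 := by rw [← lie_skew, hy h₁ hm₁, neg_zero]
  have hy₂ : ⁅h₂, y⁆ = 0 := by rw [← lie_skew, hy h₂ hm₂, neg_zero]
  have hy₃ : ⁅h₃, y⁆ = 0 := by rw [← lie_skew, hy h₃ hm₃, neg_zero]
  have hva : ∀ p ∈ H, ∀ q ∈ H, σ a₁ ⁅p, q⁆ = 0 := fun p hp q hq => hσ1h _ (H.lie_mem hp hq)
  have hvb : ∀ p ∈ H, ∀ q ∈ H, σ a₂ ⁅p, q⁆ = 0 := fun p hp q hq => hσ2h _ (H.lie_mem hp hq)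
  have hB : σ (c₁ • a₁ + c₂ • a₂ + h₁) (σ (d₁ • a₁ + d₂ • a₂ + h₂) (e₁ • a₁ + e₂ • a₂ + h₃)) + σ (d₁ • a₁ + d₂ • a₂ + h₂) (σ (e₁ • a₁ + e₂ • a₂ + h₃) (c₁ • a₁ + c₂ • a₂ + h₁)) + σ (e₁ • a₁ + e₂ • a₂ + h₃) (σ (c₁ • a₁ + c₂ • a₂ + h₁) (d₁ • a₁ + d₂ • a₂ + h₂)) = 0 := by
    rw [hσval d₁ d₂ e₁ e₂ h₂ h₃ hm₂ hm₃, hσval e₁ e₂ c₁ c₂ h₃ h₁ hm₃ hm₁,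
        hσval c₁ c₂ d₁ d₂ h₁ h₂ hm₁ hm₂]
    simp only [map_smul, hσdec c₁ c₂ h₁ hm₁, hσdec d₁ d₂ h₂ hm₂, hσdec e₁ e₂ h₃ hm₃]
    module
  have hA : σ (c₁ • a₁ + c₂ • a₂ + h₁) ⁅(d₁ • a₁ + d₂ • a₂ + h₂), (e₁ • a₁ + e₂ • a₂ + h₃)⁆ + ⁅(c₁ • a₁ + c₂ • a₂ + h₁), σ (d₁ • a₁ + d₂ • a₂ + h₂) (e₁ • a₁ + e₂ • a₂ + h₃)⁆ + σ (d₁ • a₁ + d₂ • a₂ + h₂) ⁅(e₁ • a₁ + e₂ • a₂ + h₃), (c₁ • a₁ + c₂ • a₂ + h₁)⁆ + ⁅(d₁ • a₁ + d₂ • a₂ + h₂), σ (e₁ • a₁ + e₂ • a₂ + h₃) (c₁ • a₁ + c₂ • a₂ + h₁)⁆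
      + σ (e₁ • a₁ + e₂ • a₂ + h₃) ⁅(c₁ • a₁ + c₂ • a₂ + h₁), (d₁ • a₁ + d₂ • a₂ + h₂)⁆ + ⁅(e₁ • a₁ + e₂ • a₂ + h₃), σ (c₁ • a₁ + c₂ • a₂ + h₁) (d₁ • a₁ + d₂ • a₂ + h₂)⁆ = 0 := by
    rw [hσval d₁ d₂ e₁ e₂ h₂ h₃ hm₂ hm₃, hσval e₁ e₂ c₁ c₂ h₃ h₁ hm₃ hm₁,
        hσval c₁ c₂ d₁ d₂ h₁ h₂ hm₁ hm₂]
    simp only [hbr]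
    simp only [hσdec c₁ c₂ h₁ hm₁, hσdec d₁ d₂ h₂ hm₂, hσdec e₁ e₂ h₃ hm₃]
    simp only [map_add, map_sub, map_smul, lie_add, add_lie, lie_smul, smul_lie,
      halt, hσa, hσ21, hy₁, hy₂, hy₃,
      hva h₂ hm₂ h₃ hm₃, hva h₃ hm₃ h₁ hm₁, hva h₁ hm₁ h₂ hm₂,
      hvb h₂ hm₂ h₃ hm₃, hvb h₃ hm₃ h₁ hm₁, hvb h₁ hm₁ h₂ hm₂,
      hkey h₁ hm₁, hkey h₂ hm₂, hkey h₃ hm₃,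
      smul_zero, add_zero, zero_add, smul_neg, neg_zero]
    module
  rw [hsplit, hsplit, hsplit]
  linear_combination (norm := module) lie_jacobi (c₁ • a₁ + c₂ • a₂ + h₁) (d₁ • a₁ + d₂ • a₂ + h₂) (e₁ • a₁ + e₂ • a₂ + h₃) + t • hA + (t * t) • hB
end

section
/- Let g = V_1 ⊕ ... ⊕ V_k be a Lie algebra with Carnot grading (so [V_i,V_j] ⊆ V_{i+j} and g^i = V_{i+1} ⊕ ... ⊕ V_k), let a_1, a_2 ∈ V_1 be linearly independent with [a_1, a_2] = 0, and let y ∈ V_k. Let h = V_1' ⊕ V_2 ⊕ ... ⊕ V_k where V_1' is a complement of span{a_1, a_2} in V_1, and define σ by σ(a_1,a_2) = y and σ vanishing when either argument lies in h. Then the deformed bracket μ_t = μ + t·σ is at most k-step nilpotent for every scalar t, i.e., (μ_t)^k = 0 for the lower central series of μ_t. -/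
/-- Lower central series of an arbitrary bilinear bracket `B`. -/
def lcsOf (K : Type*) {L : Type*} [Field K] [AddCommGroup L] [Module K L]
    (B : L → L → L) : ℕ → Submodule K L
  | 0 => ⊤
  | n + 1 => Submodule.span K {z | ∃ x, ∃ y ∈ lcsOf K B n, z = B x y}

/-- For a Carnot-graded `k`-step Lie algebra, `a₁, a₂ ∈ V 1` commuting and independent,
`y ∈ V k`, and `σ` the associated deformation cochain (vanishing on
`h = V₁' ⊕ V 2 ⊕ ⋯ ⊕ V k`), the deformed bracket `μ_t` is at most `k`-step nilpotent. -/
theorem deformed_bracket_at_most_k_step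
    {K L : Type*} [Field K] [CharZero K] [LieRing L] [LieAlgebra K L]
    [FiniteDimensional K L] (k : ℕ) (hk : 2 ≤ k) (V : ℕ → Submodule K L)
    (hV0 : V 0 = ⊥) (hVk : ∀ l, k < l → V l = ⊥)
    (hdirect : DirectSum.IsInternal V)
    (hbr : ∀ i j : ℕ, ∀ x ∈ V i, ∀ y ∈ V j, ⁅x, y⁆ ∈ V (i + j))
    (hcarnot : ∀ i < k,
      (LieModule.lowerCentralSeries K L L i : Submodule K L) = ⨆ j, ⨆ _ : i < j, V j)
    (a₁ a₂ : L) (ha₁ : a₁ ∈ V 1) (ha₂ : a₂ ∈ V 1)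
    (hind : LinearIndependent K ![a₁, a₂]) (hcomm : ⁅a₁, a₂⁆ = 0)
    (y : L) (hy : y ∈ V k)
    (V₁' : Submodule K L) (hV₁'le : V₁' ≤ V 1)
    (hV₁'sup : V₁' ⊔ Submodule.span K {a₁, a₂} = V 1)
    (hV₁'inf : V₁' ⊓ Submodule.span K {a₁, a₂} = ⊥)
    (σ : L →ₗ[K] L →ₗ[K] L) (halt : ∀ x, σ x x = 0)
    (hσa : σ a₁ a₂ = y)
    (hσh : ∀ x y' : L, x ∈ V₁' ⊔ (⨆ j, ⨆ _ : 2 ≤ j, V j) ∨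
        y' ∈ V₁' ⊔ (⨆ j, ⨆ _ : 2 ≤ j, V j) → σ x y' = 0) :
    ∀ t : K, lcsOf K (deformedBracket σ t) k = ⊥ := by
  intro t
  -- W n = ⨆_{j > n} V j
  set W : ℕ → Submodule K L := fun n => ⨆ j, ⨆ _ : n < j, V j with hW
  have hVleW : ∀ n j, n < j → V j ≤ W n := by
    intro n j hj
    exact le_iSup₂_of_le j hj le_rfl
  have hWtop : W 0 = ⊤ := by
    have := hcarnot 0 (by omega)
    simp only [LieModule.lowerCentralSeries_zero] at this
    show (⨆ j, ⨆ _ : 0 < j, V j) = ⊤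
    rw [← this]
    simp
  have hWbot : W k = ⊥ := by
    apply le_bot_iff.mp
    apply iSup₂_le
    intro j hj
    rw [hVk j hj]
  -- h-part
  set H : Submodule K L := V₁' ⊔ (⨆ j, ⨆ _ : 2 ≤ j, V j) with hH
  have hWH : ∀ n, 1 ≤ n → W n ≤ H := by
    intro n hn
    apply iSup₂_le
    intro j hj
    exact le_sup_of_le_right (le_iSup₂_of_le j (by omega) le_rfl)
  have htop : Submodule.span K {a₁, a₂} ⊔ H = ⊤ := by
    rw [eq_top_iff, ← hdirect.submodule_iSup_eq_top]
    apply iSup_le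
    intro i
    match i with
    | 0 => rw [hV0]; exact bot_le
    | 1 => rw [← hV₁'sup]; exact sup_le (le_sup_of_le_right le_sup_left) le_sup_left
    | (m+2) =>
        exact le_sup_of_le_right (le_sup_of_le_right (le_iSup₂_of_le (m+2) (by omega) le_rfl))
  have hanti : σ a₂ a₁ = -y := by
    have h0 := halt (a₁ + a₂)
    simp only [map_add, LinearMap.add_apply, halt a₁, halt a₂, hσa] at h0
    rw [zero_add, add_zero] at h0
    exact eq_neg_of_add_eq_zero_left h0
  -- σ always lands in span {y}
  have hσspan : ∀ x z : L, σ x z ∈ Submodule.span K {y} := by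
    have hbase : ∀ z : L, σ a₁ z ∈ Submodule.span K {y} ∧ σ a₂ z ∈ Submodule.span K {y} := by
      intro z
      have hz : z ∈ Submodule.span K {a₁, a₂} ⊔ H := htop ▸ Submodule.mem_top
      obtain ⟨u, hu, v, hv, rfl⟩ := Submodule.mem_sup.mp hz
      obtain ⟨α, β, rfl⟩ := Submodule.mem_span_pair.mp hu
      have h1 : σ a₁ v = 0 := hσh a₁ v (Or.inr hv)
      have h2 : σ a₂ v = 0 := hσh a₂ v (Or.inr hv)
      constructor
      · simp only [map_add, map_smul, h1, halt a₁, hσa, smul_zero, add_zero, zero_add,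
          smul_eq_mul]
        exact Submodule.smul_mem _ _ (Submodule.mem_span_singleton_self y)
      · simp only [map_add, map_smul, h2, halt a₂, hanti, smul_zero, add_zero, smul_neg]
        exact Submodule.neg_mem _ (Submodule.smul_mem _ _ (Submodule.mem_span_singleton_self y))
    intro x z
    have hx : x ∈ Submodule.span K {a₁, a₂} ⊔ H := htop ▸ Submodule.mem_top
    obtain ⟨u, hu, v, hv, rfl⟩ := Submodule.mem_sup.mp hx
    obtain ⟨α, β, rfl⟩ := Submodule.mem_span_pair.mp hu
    have h1 : σ v z = 0 := hσh v z (Or.inl hv)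
    simp only [map_add, map_smul, LinearMap.add_apply, LinearMap.smul_apply, h1, add_zero]
    exact Submodule.add_mem _ (Submodule.smul_mem _ _ (hbase z).1)
      (Submodule.smul_mem _ _ (hbase z).2)
  -- σ vanishes when the second argument is in W n, n ≥ 1
  have hσW : ∀ n, 1 ≤ n → ∀ x, ∀ z ∈ W n, σ x z = 0 :=
    fun n hn x z hz => hσh x z (Or.inr (hWH n hn hz))
  -- bracket maps L × W n into W (n+1)
  have hbrW : ∀ n : ℕ, ∀ x : L, ∀ z ∈ W n, ⁅x, z⁆ ∈ W (n + 1) := by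
    intro n x z hz
    have key : ∀ j, n < j → ∀ w ∈ V j, ⁅x, w⁆ ∈ W (n + 1) := by
      intro j hj w hw
      have hx : x ∈ ⨆ i, V i := by rw [hdirect.submodule_iSup_eq_top]; trivial
      induction hx using Submodule.iSup_induction' with
      | mem i u hu =>
          match i with
          | 0 =>
              rw [hV0, Submodule.mem_bot] at hu
              simp [hu]
          | (m+1) =>
              exact hVleW (n+1) (m+1+j) (by omega) (hbr (m+1) j u hu w hw)
      | zero => simp
      | add u v _ _ hu hv => rw [add_lie]; exact Submodule.add_mem _ hu hv
    induction hz using Submodule.iSup_induction' with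
    | mem j u hu =>
        by_cases hj : n < j
        · rw [iSup_pos hj] at hu
          exact key j hj u hu
        · rw [iSup_neg hj, Submodule.mem_bot] at hu
          simp [hu]
    | zero => simp
    | add u v _ _ hu hv => rw [lie_add]; exact Submodule.add_mem _ hu hv
  -- main induction: lcsOf n ≤ W n
  have main : ∀ n, n ≤ k → lcsOf K (deformedBracket σ t) n ≤ W n := by
    intro n
    induction n with
    | zero => intro _; rw [hWtop]; exact le_top
    | succ m ih =>
        intro hm
        have ihm := ih (by omega)
        rw [lcsOf]
        rw [Submodule.span_le]
        rintro _ ⟨x, z, hz, rfl⟩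
        have hzW : z ∈ W m := ihm hz
        refine Submodule.add_mem _ (hbrW m x z hzW) (Submodule.smul_mem _ _ ?_)
        rcases Nat.eq_zero_or_pos m with hm0 | hm1
        · subst hm0
          exact Submodule.span_le.mpr (by
            simp only [Set.singleton_subset_iff, SetLike.mem_coe]
            exact hVleW 1 k (by omega) hy) (hσspan x z)
        · rw [hσW m hm1 x z hzW]; simp
  apply le_bot_iff.mp
  rw [← hWbot]
  exact main k le_rfl
end

section
/- Let (g, [·,·]) be a k-step nilpotent Lie algebra with Carnot grading g = V_1 ⊕ ... ⊕ V_k, k ≥ 3, let a_1, a_2 ∈ V_1 be linearly independent with [a_1,a_2] = 0, and let y ∈ V_k with y ∉ [g^1, g^1] + [a_1, g^1] + [a_2, g^1]. Let [·,·]_t = [·,·] + t·σ be the linear deformation with σ(a_1,a_2) = y and σ vanishing on a complement as above. Then for t ≠ 0, the Lie algebra (g, [·,·]_t) admits no grading g = W_1 ⊕ ... ⊕ W_k with [W_i, W_j]_t ⊆ W_{i+j} and whose lower central series satisfies (g)^i_t = W_{i+1} ⊕ ... ⊕ W_k; i.e., (g, [·,·]_t) is not naturally graded. -/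
/-- The span of brackets `⁅A, B⁆`. -/
def brSpan (K : Type*) {L : Type*} [Field K] [LieRing L] [LieAlgebra K L]
    (A B : Submodule K L) : Submodule K L :=
  Submodule.span K {z | ∃ x ∈ A, ∃ y ∈ B, z = ⁅x, y⁆}

/-- The span of `⁅a, B⁆`. -/
def adSpan (K : Type*) {L : Type*} [Field K] [LieRing L] [LieAlgebra K L]
    (a : L) (B : Submodule K L) : Submodule K L :=
  Submodule.span K {z | ∃ x ∈ B, z = ⁅a, x⁆}

/-- Main deformation theorem: for `k ≥ 3`, a Carnot-graded `k`-step nilpotent Lie algebra,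
commuting independent `a₁, a₂ ∈ V 1`, and `y ∈ V k` with
`y ∉ ⁅g¹,g¹⁆ + ⁅a₁,g¹⁆ + ⁅a₂,g¹⁆`, the deformed algebra `(g, μ_t)` for `t ≠ 0` admits no
Carnot grading, i.e. is not naturally graded. -/
theorem deformed_algebra_not_naturally_graded
    {K L : Type*} [Field K] [CharZero K] [IsAlgClosed K] [LieRing L] [LieAlgebra K L]
    [FiniteDimensional K L] (k : ℕ) (hk : 3 ≤ k) (V : ℕ → Submodule K L)
    (hV0 : V 0 = ⊥) (hVk : ∀ l, k < l → V l = ⊥)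
    (hdirect : DirectSum.IsInternal V)
    (hbr : ∀ i j : ℕ, ∀ x ∈ V i, ∀ y ∈ V j, ⁅x, y⁆ ∈ V (i + j))
    (hcarnot : ∀ i < k,
      (LieModule.lowerCentralSeries K L L i : Submodule K L) = ⨆ j, ⨆ _ : i < j, V j)
    (hknontriv : V k ≠ ⊥)
    (a₁ a₂ : L) (ha₁ : a₁ ∈ V 1) (ha₂ : a₂ ∈ V 1)
    (hind : LinearIndependent K ![a₁, a₂]) (hcomm : ⁅a₁, a₂⁆ = 0)
    (y : L) (hy : y ∈ V k)
    (hynot : y ∉ brSpan K (LieModule.lowerCentralSeries K L L 1 : Submodule K L)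
          (LieModule.lowerCentralSeries K L L 1 : Submodule K L) ⊔
        adSpan K a₁ (LieModule.lowerCentralSeries K L L 1 : Submodule K L) ⊔
        adSpan K a₂ (LieModule.lowerCentralSeries K L L 1 : Submodule K L))
    (V₁' : Submodule K L) (hV₁'le : V₁' ≤ V 1)
    (hV₁'sup : V₁' ⊔ Submodule.span K {a₁, a₂} = V 1)
    (hV₁'inf : V₁' ⊓ Submodule.span K {a₁, a₂} = ⊥)
    (σ : L →ₗ[K] L →ₗ[K] L) (halt : ∀ x, σ x x = 0)
    (hσa : σ a₁ a₂ = y)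
    (hσh : ∀ x y' : L, x ∈ V₁' ⊔ (⨆ j, ⨆ _ : 2 ≤ j, V j) ∨
        y' ∈ V₁' ⊔ (⨆ j, ⨆ _ : 2 ≤ j, V j) → σ x y' = 0) :
    ∀ t : K, t ≠ 0 →
      ¬ ∃ W : ℕ → Submodule K L,
          W 0 = ⊥ ∧ (∀ l, k < l → W l = ⊥) ∧ DirectSum.IsInternal W ∧
          (∀ i j : ℕ, ∀ x ∈ W i, ∀ y' ∈ W j,
            deformedBracket σ t x y' ∈ W (i + j)) ∧
          (∀ i < k, lcsOf K (deformedBracket σ t) i = ⨆ j, ⨆ _ : i < j, W j) := by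
  intro t ht
  rintro ⟨W, hW0, hWtop, hWint, hWbr, hWlcs⟩
  set B : L → L → L := deformedBracket σ t with hB
  have hBdef : ∀ x z : L, B x z = ⁅x, z⁆ + t • σ x z := fun _ _ => rfl
  set g1 : Submodule K L := (LieModule.lowerCentralSeries K L L 1 : Submodule K L) with hg1def
  have h1k : 1 < k := by omega
  have h2k : 2 < k := by omega
  have hg1 : g1 = ⨆ j, ⨆ _ : 1 < j, V j := hcarnot 1 h1k
  have hsupZ : (⨆ j, ⨆ _ : 1 < j, V j) ≤ V₁' ⊔ (⨆ j, ⨆ _ : 2 ≤ j, V j) :=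
    iSup₂_le fun j hj =>
      le_trans (le_iSup₂ (f := fun j (_ : 2 ≤ j) => V j) j hj) le_sup_right
  have hg1Z : g1 ≤ V₁' ⊔ (⨆ j, ⨆ _ : 2 ≤ j, V j) := hg1 ▸ hsupZ
  have hσR : ∀ x c : L, c ∈ g1 → σ x c = 0 := fun x c hc => hσh x c (Or.inr (hg1Z hc))
  have hσL : ∀ x c : L, c ∈ g1 → σ c x = 0 := fun x c hc => hσh c x (Or.inl (hg1Z hc))
  -- σ takes values in span {y}
  have hskew : σ a₂ a₁ = -y := by
    have h := halt (a₁ + a₂)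
    simp only [map_add, LinearMap.add_apply, halt a₁, halt a₂, hσa, zero_add, add_zero] at h
    linear_combination (norm := module) h
  have htopV : (⊤ : Submodule K L) ≤
      Submodule.span K {a₁, a₂} ⊔ (V₁' ⊔ (⨆ j, ⨆ _ : 2 ≤ j, V j)) := by
    rw [← hdirect.submodule_iSup_eq_top]
    refine iSup_le fun j => ?_
    match j with
    | 0 => rw [hV0]; exact bot_le
    | 1 =>
      rw [← hV₁'sup]
      exact sup_le (le_trans le_sup_left le_sup_right) le_sup_left
    | (j + 2) =>
      exact le_trans (le_iSup₂ (f := fun j (_ : 2 ≤ j) => V j) (j + 2) (by omega))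
        (le_sup_right.trans le_sup_right)
  have hσy : ∀ x z : L, σ x z ∈ Submodule.span K {y} := by
    intro x z
    obtain ⟨p, hp, q, hq, hpq⟩ := Submodule.mem_sup.mp (htopV (Submodule.mem_top (x := x)))
    obtain ⟨p', hp', q', hq', hpq'⟩ := Submodule.mem_sup.mp (htopV (Submodule.mem_top (x := z)))
    have hq0 : ∀ w, σ q w = 0 := fun w => hσh q w (Or.inl hq)
    have hq'0 : ∀ w, σ w q' = 0 := fun w => hσh w q' (Or.inr hq')
    obtain ⟨α, β, hpab⟩ := Submodule.mem_span_pair.mp hp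
    obtain ⟨γ, δ, hpab'⟩ := Submodule.mem_span_pair.mp hp'
    have hyy : y ∈ Submodule.span K {y} := Submodule.mem_span_singleton_self y
    rw [← hpq, ← hpq', ← hpab, ← hpab']
    simp only [map_add, map_smul, LinearMap.add_apply, LinearMap.smul_apply,
      halt, hσa, hskew, hq0, hq'0, smul_zero, add_zero, zero_add, smul_neg]
    refine Submodule.add_mem _ ?_ ?_ <;>
      first
      | exact Submodule.smul_mem _ _ (Submodule.smul_mem _ _ hyy)
      | exact Submodule.neg_mem _ (Submodule.smul_mem _ _ (Submodule.smul_mem _ _ hyy))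
      | exact Submodule.smul_mem _ _ (Submodule.neg_mem _ (Submodule.smul_mem _ _ hyy))
      | exact Submodule.smul_mem _ _ (Submodule.smul_mem _ _ (Submodule.neg_mem _ hyy))
  have hyg1 : y ∈ g1 := by
    rw [hg1]; exact le_iSup₂ (f := fun j (_ : 1 < j) => V j) k h1k hy
  have hlcs_succ : ∀ n, lcsOf K B (n + 1) =
      Submodule.span K {z | ∃ x, ∃ w ∈ lcsOf K B n, z = B x w} := fun _ => rfl
  have hyN1 : y ∈ lcsOf K B 1 := by
    have hBa : B a₁ a₂ = t • y := by rw [hBdef, hcomm, hσa, zero_add]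
    have hmem : B a₁ a₂ ∈ lcsOf K B 1 := by
      rw [hlcs_succ 0]
      exact Submodule.subset_span ⟨a₁, a₂, Submodule.mem_top, rfl⟩
    have h := Submodule.smul_mem (lcsOf K B 1) t⁻¹ hmem
    rwa [hBa, smul_smul, inv_mul_cancel₀ ht, one_smul] at h
  have hspan_y_N1 : Submodule.span K {y} ≤ lcsOf K B 1 :=
    Submodule.span_le.mpr (by simpa using hyN1)
  have hspan_y_g1 : Submodule.span K {y} ≤ g1 :=
    Submodule.span_le.mpr (by simpa using hyg1)
  have hN1 : lcsOf K B 1 = g1 := by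
    apply le_antisymm
    · rw [hlcs_succ 0]
      refine Submodule.span_le.mpr ?_
      rintro z ⟨x, w, -, rfl⟩
      rw [SetLike.mem_coe, hBdef]
      refine Submodule.add_mem _ ?_ (hspan_y_g1 (Submodule.smul_mem _ _ (hσy x w)))
      rw [hg1def]
      exact (LieSubmodule.mem_toSubmodule _).mpr (by
        rw [LieModule.lowerCentralSeries_succ]
        exact LieSubmodule.lie_mem_lie (LieSubmodule.mem_top x) (LieSubmodule.mem_top w))
    · rw [hg1def]
      have heq : (LieModule.lowerCentralSeries K L L 1 : Submodule K L) =
          Submodule.span K {m | ∃ x ∈ (⊤ : LieIdeal K L),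
            ∃ n ∈ LieModule.lowerCentralSeries K L L 0, ⁅x, n⁆ = m} := by
        rw [LieModule.lowerCentralSeries_succ]
        exact LieSubmodule.lieIdeal_oper_eq_linear_span' ..
      rw [heq]
      refine Submodule.span_le.mpr ?_
      rintro z ⟨x, -, n, -, rfl⟩
      have h1 : B x n ∈ lcsOf K B 1 := by
        rw [hlcs_succ 0]
        exact Submodule.subset_span ⟨x, n, Submodule.mem_top, rfl⟩
      have h2 : ⁅x, n⁆ = B x n - t • σ x n := by rw [hBdef]; abel
      rw [SetLike.mem_coe, h2]
      exact Submodule.sub_mem _ h1 (hspan_y_N1 (Submodule.smul_mem _ _ (hσy x n)))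
  have hbr2 : ∀ u c : L, c ∈ g1 → ⁅u, c⁆ ∈ lcsOf K B 2 := by
    intro u c hc
    have hBuc : B u c = ⁅u, c⁆ := by rw [hBdef, hσR u c hc, smul_zero, add_zero]
    rw [hlcs_succ 1, ← hBuc]
    exact Submodule.subset_span ⟨u, c, hN1.symm ▸ hc, rfl⟩
  -- y lies in lcsOf B 2
  have hy2 : y ∈ lcsOf K B 2 := by
    have hyk1 : y ∈ (LieModule.lowerCentralSeries K L L (k - 1) : Submodule K L) := by
      rw [hcarnot (k - 1) (by omega)]
      exact le_iSup₂ (f := fun j (_ : k - 1 < j) => V j) k (by omega) hy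
    have hk1eq : k - 1 = (k - 2) + 1 := by omega
    rw [hk1eq, LieModule.lowerCentralSeries_succ,
      LieIdeal.toLieSubalgebra_toSubmodule,
      LieSubmodule.lieIdeal_oper_eq_linear_span'] at hyk1
    refine Submodule.span_le.mpr ?_ hyk1
    rintro z ⟨x, -, n, hn, rfl⟩
    have hng1 : n ∈ g1 := by
      rw [hg1def]
      exact (LieSubmodule.mem_toSubmodule _).mpr
        (LieModule.antitone_lowerCentralSeries K L L (by omega : 1 ≤ k - 2) hn)
    exact hbr2 x n hng1
  -- decompose a₁, a₂ with respect to W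
  have htopW : (⊤ : Submodule K L) ≤ W 1 ⊔ (⨆ j, ⨆ _ : 1 < j, W j) := by
    rw [← hWint.submodule_iSup_eq_top]
    refine iSup_le fun j => ?_
    match j with
    | 0 => rw [hW0]; exact bot_le
    | 1 => exact le_sup_left
    | (j + 2) =>
      exact le_trans (le_iSup₂ (f := fun j (_ : 1 < j) => W j) (j + 2) (by omega)) le_sup_right
  obtain ⟨b₁, hb₁, c₁, hc₁, hbc₁⟩ := Submodule.mem_sup.mp (htopW (Submodule.mem_top (x := a₁)))
  obtain ⟨b₂, hb₂, c₂, hc₂, hbc₂⟩ := Submodule.mem_sup.mp (htopW (Submodule.mem_top (x := a₂)))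
  have hWlcs1 : lcsOf K B 1 = ⨆ j, ⨆ _ : 1 < j, W j := hWlcs 1 h1k
  have hWlcs2 : lcsOf K B 2 = ⨆ j, ⨆ _ : 2 < j, W j := hWlcs 2 h2k
  have hc₁' : c₁ ∈ g1 := by rw [← hN1, hWlcs1]; exact hc₁
  have hc₂' : c₂ ∈ g1 := by rw [← hN1, hWlcs1]; exact hc₂
  have hb1eq : b₁ = a₁ - c₁ := by rw [← hbc₁]; abel
  have hb2eq : b₂ = a₂ - c₂ := by rw [← hbc₂]; abel
  have s1 : ∀ x, σ x c₂ = 0 := fun x => hσR x c₂ hc₂'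
  have s2 : ∀ x, σ c₁ x = 0 := fun x => hσL x c₁ hc₁'
  have hσb : σ b₁ b₂ = y := by
    rw [hb1eq, hb2eq]
    simp [map_sub, LinearMap.sub_apply, s1, s2, hσa]
  have hbb : B b₁ b₂ = ⁅b₁, b₂⁆ + t • y := by rw [hBdef, hσb]
  have hbreq : ⁅b₁, b₂⁆ = -⁅a₁, c₂⁆ + -⁅c₁, a₂⁆ + ⁅c₁, c₂⁆ := by
    rw [hb1eq, hb2eq]
    simp only [sub_lie, lie_sub, hcomm]
    abel
  have hc1a2 : ⁅c₁, a₂⁆ = -⁅a₂, c₁⁆ := by rw [← lie_skew a₂ c₁, neg_neg]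
  have hbrb2 : ⁅b₁, b₂⁆ ∈ lcsOf K B 2 := by
    rw [hbreq, hc1a2]
    have h1 : ⁅a₁, c₂⁆ ∈ lcsOf K B 2 := hbr2 a₁ c₂ hc₂'
    have h2 : ⁅a₂, c₁⁆ ∈ lcsOf K B 2 := hbr2 a₂ c₁ hc₁'
    have h3 : ⁅c₁, c₂⁆ ∈ lcsOf K B 2 := hbr2 c₁ c₂ hc₂'
    exact Submodule.add_mem _ (Submodule.add_mem _ (Submodule.neg_mem _ h1)
      (Submodule.neg_mem _ (Submodule.neg_mem _ h2))) h3
  have hBb2 : B b₁ b₂ ∈ lcsOf K B 2 := by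
    rw [hbb]
    exact Submodule.add_mem _ hbrb2 (Submodule.smul_mem _ _ hy2)
  have hBbW2 : B b₁ b₂ ∈ W 2 := hWbr 1 1 b₁ hb₁ b₂ hb₂
  -- disjointness forces B b₁ b₂ = 0
  have hdis : Disjoint (W 2) (⨆ j, ⨆ _ : j ≠ 2, W j) := hWint.submodule_iSupIndep 2
  have hle2 : (⨆ j, ⨆ _ : 2 < j, W j) ≤ ⨆ j, ⨆ _ : j ≠ 2, W j :=
    iSup₂_le fun j hj => le_iSup₂ (f := fun j (_ : j ≠ 2) => W j) j (by omega)
  have hzero : B b₁ b₂ = 0 :=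
    Submodule.disjoint_def.mp hdis _ hBbW2 (hle2 (by rw [← hWlcs2]; exact hBb2))
  have hty : t • y = -⁅b₁, b₂⁆ := by
    have h := hbb
    rw [hzero] at h
    linear_combination (norm := module) -h
  have hyeq : y = -(t⁻¹ • ⁅b₁, b₂⁆) := by
    have h : t⁻¹ • (t • y) = t⁻¹ • -⁅b₁, b₂⁆ := by rw [hty]
    rwa [smul_smul, inv_mul_cancel₀ ht, one_smul, smul_neg] at h
  -- derive the contradiction with hynot
  apply hynot
  have hmem1 : ⁅a₁, c₂⁆ ∈ adSpan K a₁ g1 := Submodule.subset_span ⟨c₂, hc₂', rfl⟩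
  have hmem2 : ⁅a₂, c₁⁆ ∈ adSpan K a₂ g1 := Submodule.subset_span ⟨c₁, hc₁', rfl⟩
  have hmem3 : ⁅c₁, c₂⁆ ∈ brSpan K g1 g1 := Submodule.subset_span ⟨c₁, hc₁', c₂, hc₂', rfl⟩
  have hbrS : ⁅b₁, b₂⁆ ∈ brSpan K g1 g1 ⊔ adSpan K a₁ g1 ⊔ adSpan K a₂ g1 := by
    rw [hbreq, hc1a2]
    refine Submodule.add_mem _ (Submodule.add_mem _ ?_ ?_) ?_
    · exact Submodule.neg_mem _ (Submodule.mem_sup_left (Submodule.mem_sup_right hmem1))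
    · exact Submodule.neg_mem _ (Submodule.neg_mem _ (Submodule.mem_sup_right hmem2))
    · exact Submodule.mem_sup_left (Submodule.mem_sup_left hmem3)
  rw [hyeq]
  exact Submodule.neg_mem _ (Submodule.smul_mem _ _ hbrS)
end

section
/- Let (g, [·,·]_t) be as in the previous deformation setup with deformed bracket [·,·]_t and suppose g = W_1 ⊕ ... ⊕ W_k is a grading of (g, [·,·]_t) with [W_i,W_j]_t ⊆ W_{i+j} and W_j ⊕ ... ⊕ W_k = V_j ⊕ ... ⊕ V_k for all j. Write a_1 = w_1 + b and a_2 = w_1' + c with w_1, w_1' ∈ W_1 and b, c ∈ [g,g]. If k ≥ 3 and [w_1, w_1']_t = 0, then t·y = [a_1, c] − [b, c] + [b, a_2], and hence t·y ∈ [g^1, g^1] + [a_1, g^1] + [a_2, g^1]. -/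
/-- Key computation: if the deformed algebra had a Carnot-type grading `W` with
`W_j ⊕ ⋯ ⊕ W_k = V_j ⊕ ⋯ ⊕ V_k` and `a₁ = w₁ + b`, `a₂ = w₁' + c` with
`w₁, w₁' ∈ W 1`, `b, c ∈ [g,g]`, and `[w₁, w₁']_t = 0` (forced when `k ≥ 3`), then
`t • y = ⁅a₁,c⁆ − ⁅b,c⁆ + ⁅b,a₂⁆ ∈ ⁅g¹,g¹⁆ + ⁅a₁,g¹⁆ + ⁅a₂,g¹⁆`. -/
theorem deformed_grading_forces_ty_in_subspace
    {K L : Type*} [Field K] [CharZero K] [LieRing L] [LieAlgebra K L]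
    [FiniteDimensional K L] (k : ℕ) (hk : 3 ≤ k) (V : ℕ → Submodule K L)
    (hV0 : V 0 = ⊥) (hVk : ∀ l, k < l → V l = ⊥)
    (hdirect : DirectSum.IsInternal V)
    (hbr : ∀ i j : ℕ, ∀ x ∈ V i, ∀ y ∈ V j, ⁅x, y⁆ ∈ V (i + j))
    (hcarnot : ∀ i < k,
      (LieModule.lowerCentralSeries K L L i : Submodule K L) = ⨆ j, ⨆ _ : i < j, V j)
    (a₁ a₂ : L) (ha₁ : a₁ ∈ V 1) (ha₂ : a₂ ∈ V 1)
    (hind : LinearIndependent K ![a₁, a₂]) (hcomm : ⁅a₁, a₂⁆ = 0)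
    (y : L) (hy : y ∈ V k)
    (V₁' : Submodule K L) (hV₁'le : V₁' ≤ V 1)
    (hV₁'sup : V₁' ⊔ Submodule.span K {a₁, a₂} = V 1)
    (hV₁'inf : V₁' ⊓ Submodule.span K {a₁, a₂} = ⊥)
    (σ : L →ₗ[K] L →ₗ[K] L) (halt : ∀ x, σ x x = 0)
    (hσa : σ a₁ a₂ = y)
    (hσh : ∀ x y' : L, x ∈ V₁' ⊔ (⨆ j, ⨆ _ : 2 ≤ j, V j) ∨
        y' ∈ V₁' ⊔ (⨆ j, ⨆ _ : 2 ≤ j, V j) → σ x y' = 0)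
    (t : K)
    (W : ℕ → Submodule K L)
    (hW0 : W 0 = ⊥) (hWk : ∀ l, k < l → W l = ⊥)
    (hWdirect : DirectSum.IsInternal W)
    (hWbr : ∀ i j : ℕ, ∀ x ∈ W i, ∀ y' ∈ W j,
      deformedBracket σ t x y' ∈ W (i + j))
    (hWV : ∀ j : ℕ, (⨆ i, ⨆ _ : j ≤ i, W i) = ⨆ i, ⨆ _ : j ≤ i, V i)
    (w₁ w₁' b c : L) (hw₁ : w₁ ∈ W 1) (hw₁' : w₁' ∈ W 1)
    (hb : b ∈ (LieModule.lowerCentralSeries K L L 1 : Submodule K L))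
    (hc : c ∈ (LieModule.lowerCentralSeries K L L 1 : Submodule K L))
    (ha₁dec : a₁ = w₁ + b) (ha₂dec : a₂ = w₁' + c)
    (hw : deformedBracket σ t w₁ w₁' = 0) :
    t • y = ⁅a₁, c⁆ - ⁅b, c⁆ + ⁅b, a₂⁆ ∧
      t • y ∈ brSpan K (LieModule.lowerCentralSeries K L L 1 : Submodule K L)
            (LieModule.lowerCentralSeries K L L 1 : Submodule K L) ⊔
          adSpan K a₁ (LieModule.lowerCentralSeries K L L 1 : Submodule K L) ⊔
          adSpan K a₂ (LieModule.lowerCentralSeries K L L 1 : Submodule K L) := by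
  -- lcs 1 sits inside the "degree ≥ 2" part, where σ vanishes
  have hsupeq : (⨆ j, ⨆ _ : 1 < j, V j) = ⨆ j, ⨆ _ : 2 ≤ j, V j := rfl
  have hlcs : (LieModule.lowerCentralSeries K L L 1 : Submodule K L) ≤
      V₁' ⊔ (⨆ j, ⨆ _ : 2 ≤ j, V j) := by
    rw [hcarnot 1 (by omega), hsupeq]; exact le_sup_right
  have hσb : ∀ z, σ b z = 0 := fun z => hσh b z (Or.inl (hlcs hb))
  have hσc : ∀ z, σ z c = 0 := fun z => hσh z c (Or.inr (hlcs hc))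
  have key : t • y = ⁅a₁, c⁆ - ⁅b, c⁆ + ⁅b, a₂⁆ := by
    have hw1 : w₁ = a₁ - b := by rw [ha₁dec]; abel
    have hw1' : w₁' = a₂ - c := by rw [ha₂dec]; abel
    have hσw : σ w₁ w₁' = y := by
      rw [hw1, hw1']
      simp only [map_sub, LinearMap.sub_apply, hσb, hσc, hσa]
      abel
    have := hw
    rw [deformedBracket, hσw, hw1, hw1'] at this
    have hbr : ⁅a₁ - b, a₂ - c⁆ = ⁅a₁, a₂⁆ - ⁅a₁, c⁆ - ⁅b, a₂⁆ + ⁅b, c⁆ := by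
      simp only [lie_sub, sub_lie]; abel
    rw [hbr, hcomm] at this
    have h2 := eq_neg_of_add_eq_zero_right this
    rw [h2]; abel
  refine ⟨key, ?_⟩
  rw [key]
  have h1 : ⁅a₁, c⁆ ∈ adSpan K a₁ (LieModule.lowerCentralSeries K L L 1 : Submodule K L) :=
    Submodule.subset_span ⟨c, hc, rfl⟩
  have h2 : ⁅b, c⁆ ∈ brSpan K (LieModule.lowerCentralSeries K L L 1 : Submodule K L)
      (LieModule.lowerCentralSeries K L L 1 : Submodule K L) :=
    Submodule.subset_span ⟨b, hb, c, hc, rfl⟩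
  have h3 : ⁅b, a₂⁆ ∈ adSpan K a₂ (LieModule.lowerCentralSeries K L L 1 : Submodule K L) := by
    have : ⁅a₂, b⁆ ∈ adSpan K a₂ (LieModule.lowerCentralSeries K L L 1 : Submodule K L) :=
      Submodule.subset_span ⟨b, hb, rfl⟩
    have := neg_mem this
    rwa [← lie_skew, neg_neg] at this
  exact add_mem (sub_mem (Submodule.mem_sup_left (Submodule.mem_sup_right h1))
    (Submodule.mem_sup_left (Submodule.mem_sup_left h2))) (Submodule.mem_sup_right h3)
end

section
/- Let n be a 2-step nilpotent Lie algebra with bracket μ, decomposed as n = v ⊕ z where z is the center. Suppose v, w ∈ v are linearly independent, μ(v, w) = 0, and there exists z ∈ z not belonging to the span of {μ(v, x) : x ∈ n} ∪ {μ(w, x) : x ∈ n}. Then the 2-cochain φ = v* ∧ w* ⊗ z is not in the image of the Chevalley–Eilenberg differential δ¹, i.e., there is no linear map f : n → n with φ(x, y) = μ(f(x), y) + μ(x, f(y)) − f(μ(x, y)) for all x, y. -/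
/-- Non-coboundary criterion for 2-step nilpotent Lie algebras: if `v, w` are independent
elements of a complement of the center with `⁅v,w⁆ = 0` and `z` is a central element not in
`span(⁅v,n⁆ ∪ ⁅w,n⁆)`, then the 2-cochain `v* ∧ w* ⊗ z` is not a Chevalley–Eilenberg
coboundary. -/
theorem cochain_not_coboundary
    {K L : Type*} [Field K] [CharZero K] [LieRing L] [LieAlgebra K L]
    [FiniteDimensional K L]
    (h2 : LieModule.lowerCentralSeries K L L 2 = ⊥)
    (h1 : LieModule.lowerCentralSeries K L L 1 ≠ ⊥)
    (Vc : Submodule K L)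
    (hcompl : IsCompl Vc (LieAlgebra.center K L : Submodule K L))
    (v w : L) (hv : v ∈ Vc) (hw : w ∈ Vc)
    (hind : LinearIndependent K ![v, w]) (hvw : ⁅v, w⁆ = 0)
    (z : L) (hz : z ∈ LieAlgebra.center K L)
    (hznot : z ∉ Submodule.span K
      ({u | ∃ x : L, u = ⁅v, x⁆} ∪ {u | ∃ x : L, u = ⁅w, x⁆}))
    (vstar wstar : L →ₗ[K] K)
    (hvv : vstar v = 1) (hvw' : vstar w = 0)
    (hwv : wstar v = 0) (hww : wstar w = 1) :
    ¬ ∃ f : L →ₗ[K] L, ∀ x y : L,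
        (vstar x * wstar y - vstar y * wstar x) • z =
          ⁅f x, y⁆ + ⁅x, f y⁆ - f ⁅x, y⁆ := by
  rintro ⟨f, hf⟩
  have h := hf v w
  rw [hvv, hww, hvw', hwv, hvw, map_zero] at h
  simp only [mul_one, mul_zero, sub_zero, one_smul] at h
  apply hznot
  have ha : ⁅v, f w⁆ ∈ Submodule.span K
      ({u | ∃ x : L, u = ⁅v, x⁆} ∪ {u | ∃ x : L, u = ⁅w, x⁆}) :=
    Submodule.subset_span (Or.inl ⟨f w, rfl⟩)
  have hb : ⁅w, f v⁆ ∈ Submodule.span K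
      ({u | ∃ x : L, u = ⁅v, x⁆} ∪ {u | ∃ x : L, u = ⁅w, x⁆}) :=
    Submodule.subset_span (Or.inr ⟨f v, rfl⟩)
  have hz' : z = ⁅v, f w⁆ - ⁅w, f v⁆ := by
    rw [h, ← lie_skew w (f v)]; abel
  rw [hz']
  exact Submodule.sub_mem _ ha hb
end

section
/- Let g be the 2-step nilpotent Lie algebra associated to the 4-cycle graph: g has basis v_1, v_2, v_3, v_4, z_{12}, z_{23}, z_{34}, z_{41} with nonzero brackets [v_1,v_2] = z_{12}, [v_2,v_3] = z_{23}, [v_3,v_4] = z_{34}, [v_4,v_1] = z_{41}, and [v_1,v_3] = [v_2,v_4] = 0, all z_{ij} central. If σ is an alternating bilinear map g × g → g satisfying μ(σ(x,y), w) + σ(μ(x,y), w) = 0 for all x, y, w ∈ g (i.e., σ ∈ ker η₂), then σ(v_1, v_3) and σ(v_2, v_4) belong to the center of g. -/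
/-- In the 2-step nilpotent Lie algebra of the 4-cycle graph, any `σ ∈ ker η₂` sends the
non-adjacent pairs `(v₁,v₃)` and `(v₂,v₄)` into the center. -/
theorem four_cycle_ker_eta_central_values
    {K L : Type*} [Field K] [CharZero K] [LieRing L] [LieAlgebra K L]
    (v₁ v₂ v₃ v₄ z₁₂ z₂₃ z₃₄ z₄₁ : L)
    (hind : LinearIndependent K ![v₁, v₂, v₃, v₄, z₁₂, z₂₃, z₃₄, z₄₁])
    (hspan : Submodule.span K
      (Set.range ![v₁, v₂, v₃, v₄, z₁₂, z₂₃, z₃₄, z₄₁]) = ⊤)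
    (h12 : ⁅v₁, v₂⁆ = z₁₂) (h23 : ⁅v₂, v₃⁆ = z₂₃)
    (h34 : ⁅v₃, v₄⁆ = z₃₄) (h41 : ⁅v₄, v₁⁆ = z₄₁)
    (h13 : ⁅v₁, v₃⁆ = 0) (h24 : ⁅v₂, v₄⁆ = 0)
    (hcent : ∀ x : L, ⁅z₁₂, x⁆ = 0 ∧ ⁅z₂₃, x⁆ = 0 ∧ ⁅z₃₄, x⁆ = 0 ∧ ⁅z₄₁, x⁆ = 0)
    (σ : L →ₗ[K] L →ₗ[K] L) (halt : ∀ x, σ x x = 0)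
    (hker : ∀ x y w : L, ⁅σ x y, w⁆ + σ ⁅x, y⁆ w = 0) :
    σ v₁ v₃ ∈ LieAlgebra.center K L ∧ σ v₂ v₄ ∈ LieAlgebra.center K L := by
  have key : ∀ a b : L, ⁅a, b⁆ = 0 → σ a b ∈ LieAlgebra.center K L := by
    intro a b hab
    intro w
    have h := hker a b w
    rw [hab] at h
    simp only [map_zero, LinearMap.zero_apply, add_zero] at h
    rw [← lie_skew, h, neg_zero]
  exact ⟨key v₁ v₃ h13, key v₂ v₄ h24⟩
end

section
/- Let g be the 2-step nilpotent Lie algebra of the 4-cycle graph with bracket μ as above. Then every alternating bilinear map σ : g × g → g satisfying η₂(σ) = 0 (where η₂(σ)(x,y,w) = μ(σ(x,y),w) + σ(μ(x,y),w)) lies in the image of the Chevalley–Eilenberg differential δ¹: there exists a linear map f : g → g with σ(x,y) = μ(f(x),y) + μ(x,f(y)) − f(μ(x,y)) for all x, y ∈ g. Consequently H²_{2-nil}(μ,μ) = ker(η₂)/Im(δ¹) = 0. -/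
set_option linter.unusedTactic false in
set_option maxHeartbeats 4000000 in
/-- For the 2-step nilpotent Lie algebra of the 4-cycle graph, every `σ ∈ ker η₂` is a
Chevalley–Eilenberg coboundary; hence `H²_{2-nil}(μ,μ) = 0`. -/
theorem four_cycle_ker_eta_is_coboundary
    {K L : Type*} [Field K] [CharZero K] [LieRing L] [LieAlgebra K L]
    (v₁ v₂ v₃ v₄ z₁₂ z₂₃ z₃₄ z₄₁ : L)
    (hind : LinearIndependent K ![v₁, v₂, v₃, v₄, z₁₂, z₂₃, z₃₄, z₄₁])
    (hspan : Submodule.span K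
      (Set.range ![v₁, v₂, v₃, v₄, z₁₂, z₂₃, z₃₄, z₄₁]) = ⊤)
    (h12 : ⁅v₁, v₂⁆ = z₁₂) (h23 : ⁅v₂, v₃⁆ = z₂₃)
    (h34 : ⁅v₃, v₄⁆ = z₃₄) (h41 : ⁅v₄, v₁⁆ = z₄₁)
    (h13 : ⁅v₁, v₃⁆ = 0) (h24 : ⁅v₂, v₄⁆ = 0)
    (hcent : ∀ x : L, ⁅z₁₂, x⁆ = 0 ∧ ⁅z₂₃, x⁆ = 0 ∧ ⁅z₃₄, x⁆ = 0 ∧ ⁅z₄₁, x⁆ = 0)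
    (σ : L →ₗ[K] L →ₗ[K] L) (halt : ∀ x, σ x x = 0)
    (hker : ∀ x y w : L, ⁅σ x y, w⁆ + σ ⁅x, y⁆ w = 0) :
    ∃ f : L →ₗ[K] L, ∀ x y : L, σ x y = ⁅f x, y⁆ + ⁅x, f y⁆ - f ⁅x, y⁆ := by
  classical
  -- skew symmetry of σ
  have hskew : ∀ x y : L, σ y x = -σ x y := by
    intro x y
    have h := halt (x + y)
    simp only [map_add, LinearMap.add_apply, halt, zero_add, add_zero] at h
    exact eq_neg_of_add_eq_zero_left h
  -- central elements, both sides
  have hc1 : ∀ x : L, ⁅z₁₂, x⁆ = 0 := fun x => (hcent x).1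
  have hc2 : ∀ x : L, ⁅z₂₃, x⁆ = 0 := fun x => (hcent x).2.1
  have hc3 : ∀ x : L, ⁅z₃₄, x⁆ = 0 := fun x => (hcent x).2.2.1
  have hc4 : ∀ x : L, ⁅z₄₁, x⁆ = 0 := fun x => (hcent x).2.2.2
  have hc1' : ∀ x : L, ⁅x, z₁₂⁆ = 0 := fun x => by rw [← lie_skew, hc1, neg_zero]
  have hc2' : ∀ x : L, ⁅x, z₂₃⁆ = 0 := fun x => by rw [← lie_skew, hc2, neg_zero]
  have hc3' : ∀ x : L, ⁅x, z₃₄⁆ = 0 := fun x => by rw [← lie_skew, hc3, neg_zero]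
  have hc4' : ∀ x : L, ⁅x, z₄₁⁆ = 0 := fun x => by rw [← lie_skew, hc4, neg_zero]
  -- reversed brackets
  have h21 : ⁅v₂, v₁⁆ = -z₁₂ := by rw [← lie_skew, h12]
  have h32 : ⁅v₃, v₂⁆ = -z₂₃ := by rw [← lie_skew, h23]
  have h43 : ⁅v₄, v₃⁆ = -z₃₄ := by rw [← lie_skew, h34]
  have h14 : ⁅v₁, v₄⁆ = -z₄₁ := by rw [← lie_skew, h41]
  have h31 : ⁅v₃, v₁⁆ = 0 := by rw [← lie_skew, h13, neg_zero]
  have h42 : ⁅v₄, v₂⁆ = 0 := by rw [← lie_skew, h24, neg_zero]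
  -- σ on central elements
  have hs12 : ∀ w : L, σ z₁₂ w = -⁅σ v₁ v₂, w⁆ := fun w => by
    have h := hker v₁ v₂ w; rw [h12] at h; rw [add_comm] at h; exact eq_neg_of_add_eq_zero_left h
  have hs23 : ∀ w : L, σ z₂₃ w = -⁅σ v₂ v₃, w⁆ := fun w => by
    have h := hker v₂ v₃ w; rw [h23] at h; rw [add_comm] at h; exact eq_neg_of_add_eq_zero_left h
  have hs34 : ∀ w : L, σ z₃₄ w = -⁅σ v₃ v₄, w⁆ := fun w => by
    have h := hker v₃ v₄ w; rw [h34] at h; rw [add_comm] at h; exact eq_neg_of_add_eq_zero_left h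
  have hs41 : ∀ w : L, σ z₄₁ w = -⁅σ v₄ v₁, w⁆ := fun w => by
    have h := hker v₄ v₁ w; rw [h41] at h; rw [add_comm] at h; exact eq_neg_of_add_eq_zero_left h
  have hs12' : ∀ w : L, σ w z₁₂ = ⁅σ v₁ v₂, w⁆ := fun w => by
    rw [hskew z₁₂ w, hs12, neg_neg]
  have hs23' : ∀ w : L, σ w z₂₃ = ⁅σ v₂ v₃, w⁆ := fun w => by
    rw [hskew z₂₃ w, hs23, neg_neg]
  have hs34' : ∀ w : L, σ w z₃₄ = ⁅σ v₃ v₄, w⁆ := fun w => by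
    rw [hskew z₃₄ w, hs34, neg_neg]
  have hs41' : ∀ w : L, σ w z₄₁ = ⁅σ v₄ v₁, w⁆ := fun w => by
    rw [hskew z₄₁ w, hs41, neg_neg]
  -- the basis
  set b : Module.Basis (Fin 8) K L := Module.Basis.mk hind hspan.ge with hbdef
  have hb0 : b 0 = v₁ := by rw [hbdef, Module.Basis.mk_apply]; rfl
  have hb1 : b 1 = v₂ := by rw [hbdef, Module.Basis.mk_apply]; rfl
  have hb2 : b 2 = v₃ := by rw [hbdef, Module.Basis.mk_apply]; rfl
  have hb3 : b 3 = v₄ := by rw [hbdef, Module.Basis.mk_apply]; rfl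
  have hb4 : b 4 = z₁₂ := by rw [hbdef, Module.Basis.mk_apply]; rfl
  have hb5 : b 5 = z₂₃ := by rw [hbdef, Module.Basis.mk_apply]; rfl
  have hb6 : b 6 = z₃₄ := by rw [hbdef, Module.Basis.mk_apply]; rfl
  have hb7 : b 7 = z₄₁ := by rw [hbdef, Module.Basis.mk_apply]; rfl
  have key : ∀ (c d : K) (i j : Fin 8), i ≠ j → c • b i + d • b j = 0 → c = 0 := by
    intro c d i j hij h
    have := congrArg (fun x => b.repr x i) h
    simpa [Module.Basis.repr_self, Finsupp.single_apply, hij.symm] using this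
  -- decomposition of central elements
  have hdec : ∀ p : L, (∀ w : L, ⁅p, w⁆ = 0) →
      p = b.repr p 4 • z₁₂ + b.repr p 5 • z₂₃ + b.repr p 6 • z₃₄ + b.repr p 7 • z₄₁ := by
    intro p hcp
    have hsum := b.sum_repr p
    rw [Fin.sum_univ_eight, hb0, hb1, hb2, hb3, hb4, hb5, hb6, hb7] at hsum
    have e2 : b.repr p 0 • b 4 + (-(b.repr p 2)) • b 5 = 0 := by
      have h := hcp v₂
      rw [← hsum] at h
      rw [hb4, hb5]
      simpa [add_lie, smul_lie, lie_self, h12, h32, h42, hc1, hc2, hc3, hc4,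
        neg_smul, smul_neg, sub_eq_add_neg] using h
    have e1 : (-(b.repr p 1)) • b 4 + b.repr p 3 • b 7 = 0 := by
      have h := hcp v₁
      rw [← hsum] at h
      rw [hb4, hb7]
      simpa [add_lie, smul_lie, lie_self, h21, h31, h41, hc1, hc2, hc3, hc4,
        smul_neg, neg_smul] using h
    have r0 : b.repr p 0 = 0 := key _ _ 4 5 (by decide) e2
    have r2 : b.repr p 2 = 0 := by
      have := key _ _ 5 4 (by decide) (by rw [add_comm] at e2; exact e2)
      simpa using this
    have r1 : b.repr p 1 = 0 := by
      have := key _ _ 4 7 (by decide) e1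
      simpa using this
    have r3 : b.repr p 3 = 0 := key _ _ 7 4 (by decide) (by rw [add_comm] at e1; exact e1)
    rw [r0, r1, r2, r3] at hsum
    simp only [zero_smul, zero_add] at hsum
    exact hsum.symm
  -- centrality of σ v₁ v₃ and σ v₂ v₄
  have hpc : ∀ w : L, ⁅σ v₁ v₃, w⁆ = 0 := by
    intro w
    have h := hker v₁ v₃ w
    rw [h13] at h
    simpa using h
  have hqc : ∀ w : L, ⁅σ v₂ v₄, w⁆ = 0 := by
    intro w
    have h := hker v₂ v₄ w
    rw [h24] at h
    simpa using h
  set r : Fin 8 → K := fun i => b.repr (σ v₁ v₃) i with hrdef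
  set s : Fin 8 → K := fun i => b.repr (σ v₂ v₄) i with hsdef
  have hp : σ v₁ v₃ = r 4 • z₁₂ + r 5 • z₂₃ + r 6 • z₃₄ + r 7 • z₄₁ := hdec _ hpc
  have hq : σ v₂ v₄ = s 4 • z₁₂ + s 5 • z₂₃ + s 6 • z₃₄ + s 7 • z₄₁ := hdec _ hqc
  -- define f
  set vals : Fin 8 → L := ![r 5 • v₂ - r 6 • v₄, -(s 7) • v₁ + s 6 • v₃,
    r 4 • v₂ - r 7 • v₄, -(s 4) • v₁ + s 5 • v₃,
    -(σ v₁ v₂), -(σ v₂ v₃), -(σ v₃ v₄), -(σ v₄ v₁)] with hvals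
  set f : L →ₗ[K] L := b.constr K vals with hfdef
  have hf : ∀ i : Fin 8, f (b i) = vals i := fun i => b.constr_basis K vals i
  have hf0 : f v₁ = r 5 • v₂ - r 6 • v₄ := by have := hf 0; rwa [hb0, hvals] at this
  have hf1 : f v₂ = -(s 7) • v₁ + s 6 • v₃ := by have := hf 1; rwa [hb1, hvals] at this
  have hf2 : f v₃ = r 4 • v₂ - r 7 • v₄ := by have := hf 2; rwa [hb2, hvals] at this
  have hf3 : f v₄ = -(s 4) • v₁ + s 5 • v₃ := by have := hf 3; rwa [hb3, hvals] at this
  have hf4 : f z₁₂ = -(σ v₁ v₂) := by have := hf 4; rwa [hb4, hvals] at this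
  have hf5 : f z₂₃ = -(σ v₂ v₃) := by have := hf 5; rwa [hb5, hvals] at this
  have hf6 : f z₃₄ = -(σ v₃ v₄) := by have := hf 6; rwa [hb6, hvals] at this
  have hf7 : f z₄₁ = -(σ v₄ v₁) := by have := hf 7; rwa [hb7, hvals] at this
  refine ⟨f, ?_⟩
  -- the coboundary as a bilinear map
  set T : L →ₗ[K] L →ₗ[K] L := LinearMap.mk₂ K
      (fun x y => ⁅f x, y⁆ + ⁅x, f y⁆ - f ⁅x, y⁆)
      (by intro x x' y; simp only [map_add, add_lie, lie_add]; abel)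
      (by intro c x y; simp only [map_smul, smul_lie, lie_smul, smul_add, smul_sub])
      (by intro x y y'; simp only [map_add, add_lie, lie_add]; abel)
      (by intro c x y; simp only [map_smul, smul_lie, lie_smul, smul_add, smul_sub])
    with hT
  have main : σ = T := by
    apply b.ext
    intro i
    apply b.ext
    intro j
    fin_cases i <;> fin_cases j <;>
      simp only [Fin.reduceFinMk, Fin.isValue, hb0, hb1, hb2, hb3, hb4, hb5, hb6, hb7, hT, LinearMap.mk₂_apply,
        hf0, hf1, hf2, hf3, hf4, hf5, hf6, hf7,
        h12, h23, h34, h41, h13, h24, h21, h32, h43, h14, h31, h42,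
        hc1, hc2, hc3, hc4, hc1', hc2', hc3', hc4',
        hs12, hs23, hs34, hs41, hs12', hs23', hs34', hs41',
        halt, map_zero, map_neg, map_sub, map_add, lie_add, add_lie, lie_smul,
        smul_lie, lie_neg, neg_lie, sub_lie, lie_sub, lie_zero, zero_lie,
        lie_self, smul_zero, neg_zero, smul_neg, neg_smul, zero_smul, add_zero,
        zero_add, sub_zero, zero_sub, neg_neg, lie_skew, sub_neg_eq_add,
        sub_self] <;>
      first
        | rfl
        | module
        | (rw [hp]; module)
        | (rw [hq]; module)
        | (rw [hskew, hp]; module)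
        | (rw [hskew, hq]; module)
        | (rw [hskew]; module)
        | (rw [hskew])
  intro x y
  rw [main]
  rfl
end

section
/- Let G = (V, E) be a simple graph with no isolated vertices that is not complete and with |V| ≥ 5, and let n = g(2, G) be the associated 2-step nilpotent graph Lie algebra with center z = span{v_i ∧ v_j : {v_i, v_j} ∈ E}. Then there exist linearly independent elements v, w in span(V) with [v, w] = 0 and an element z ∈ z with z ∉ span([v, n] ∪ [w, n]). -/
theorem graph_aux {V : Type*} [Fintype V] [LinearOrder V] (G : SimpleGraph V)
    (h5 : 5 ≤ Fintype.card V)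
    (hnc : ¬ ∀ i j : V, i ≠ j → G.Adj i j)
    (hiso : ∀ i : V, ∃ j, G.Adj i j) :
    ∃ a b i j : V, a ≠ b ∧ ¬ G.Adj a b ∧ i < j ∧ G.Adj i j ∧
      i ≠ a ∧ i ≠ b ∧ j ≠ a ∧ j ≠ b := by
  push_neg at hnc
  obtain ⟨a, b, hab, hnadj⟩ := hnc
  -- helper to order an edge
  have order : ∀ (a b i j : V), a ≠ b → ¬ G.Adj a b → G.Adj i j →
      i ≠ a → i ≠ b → j ≠ a → j ≠ b →
      ∃ a' b' i' j' : V, a' ≠ b' ∧ ¬ G.Adj a' b' ∧ i' < j' ∧ G.Adj i' j' ∧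
        i' ≠ a' ∧ i' ≠ b' ∧ j' ≠ a' ∧ j' ≠ b' := by
    intro a b i j hab hnadj hadj hia hib hja hjb
    rcases lt_or_gt_of_ne (G.ne_of_adj hadj) with h | h
    · exact ⟨a, b, i, j, hab, hnadj, h, hadj, hia, hib, hja, hjb⟩
    · exact ⟨a, b, j, i, hab, hnadj, h, hadj.symm, hja, hjb, hia, hib⟩
  by_cases hedge : ∃ i j : V, G.Adj i j ∧ i ≠ a ∧ i ≠ b ∧ j ≠ a ∧ j ≠ b
  · obtain ⟨i, j, hadj, hia, hib, hja, hjb⟩ := hedge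
    exact order a b i j hab hnadj hadj hia hib hja hjb
  · push_neg at hedge
    -- every edge meets {a, b}
    have hmeet : ∀ i j : V, G.Adj i j → i = a ∨ i = b ∨ j = a ∨ j = b := by
      intro i j hadj
      by_contra hc
      push_neg at hc
      exact hc.2.2.2 (hedge i j hadj hc.1 hc.2.1 hc.2.2.1)
    -- find three vertices outside {a, b}
    set s : Finset V := Finset.univ \ {a, b} with hs
    have hcard : 3 ≤ s.card := by
      have : ({a, b} : Finset V).card ≤ 2 := Finset.card_insert_le _ _ |>.trans (by simp)
      have h2 := Finset.card_sdiff_of_subset (Finset.subset_univ ({a,b} : Finset V))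
      rw [Finset.card_univ] at h2
      rw [← hs] at h2
      omega
    obtain ⟨c, hc⟩ := Finset.card_pos.mp (by omega : 0 < s.card)
    have hcard2 : 2 ≤ (s.erase c).card := by
      have := Finset.card_erase_of_mem hc; omega
    obtain ⟨d, hd⟩ := Finset.card_pos.mp (by omega : 0 < (s.erase c).card)
    have hcard3 : 1 ≤ ((s.erase c).erase d).card := by
      have := Finset.card_erase_of_mem hd; omega
    obtain ⟨e, he⟩ := Finset.card_pos.mp (by omega : 0 < ((s.erase c).erase d).card)
    have hdc : d ≠ c := Finset.ne_of_mem_erase hd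
    have hds : d ∈ s := Finset.mem_of_mem_erase hd
    have hed : e ≠ d := Finset.ne_of_mem_erase he
    have hec : e ≠ c := Finset.ne_of_mem_erase (Finset.mem_of_mem_erase he)
    have hes : e ∈ s := Finset.mem_of_mem_erase (Finset.mem_of_mem_erase he)
    have hout : ∀ x, x ∈ s → x ≠ a ∧ x ≠ b := by
      intro x hx
      simp [hs] at hx
      exact hx
    obtain ⟨hca, hcb⟩ := hout c hc
    obtain ⟨hda, hdb⟩ := hout d hds
    obtain ⟨hea, heb⟩ := hout e hes
    -- c and d are not adjacent
    have hncd : ¬ G.Adj c d := by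
      intro hadj
      rcases hmeet c d hadj with h | h | h | h
      exacts [hca h, hcb h, hda h, hdb h]
    -- e has a neighbor, necessarily a or b
    obtain ⟨y, hy⟩ := hiso e
    have hyab : y = a ∨ y = b := by
      rcases hmeet e y hy with h | h | h | h
      exacts [absurd h hea, absurd h heb, Or.inl h, Or.inr h]
    have hyc : y ≠ c := by rcases hyab with rfl | rfl <;> [exact Ne.symm hca; exact Ne.symm hcb]
    have hyd : y ≠ d := by rcases hyab with rfl | rfl <;> [exact Ne.symm hda; exact Ne.symm hdb]
    exact order c d e y hdc.symm hncd hy hec hed hyc hyd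

/-- For a non-complete simple graph `G` with at least 5 vertices and no isolated vertices,
the graph Lie algebra `n = g(2,G)` has two independent commuting elements `v, w` of
`span(V)` and a central element `z ∉ span(⁅v,n⁆ ∪ ⁅w,n⁆)`. -/
theorem graph_lie_algebra_nonrigidity_hypotheses
    {K L V : Type*} [Field K] [CharZero K] [LieRing L] [LieAlgebra K L]
    [Fintype V] [LinearOrder V] (G : SimpleGraph V)
    (h5 : 5 ≤ Fintype.card V)
    (hnc : ¬ ∀ i j : V, i ≠ j → G.Adj i j)
    (hiso : ∀ i : V, ∃ j, G.Adj i j) (ν : V → L)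
    (hind : LinearIndependent K
      (Sum.elim ν (fun p : {p : V × V // p.1 < p.2 ∧ G.Adj p.1 p.2} =>
        ⁅ν p.1.1, ν p.1.2⁆)))
    (hspan : Submodule.span K (Set.range
      (Sum.elim ν (fun p : {p : V × V // p.1 < p.2 ∧ G.Adj p.1 p.2} =>
        ⁅ν p.1.1, ν p.1.2⁆))) = ⊤)
    (hnadj : ∀ i j : V, ¬ G.Adj i j → ⁅ν i, ν j⁆ = 0)
    (hcent : ∀ i j : V, G.Adj i j → ∀ x : L, ⁅⁅ν i, ν j⁆, x⁆ = 0) :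
    ∃ v w : L, v ∈ Submodule.span K (Set.range ν) ∧
      w ∈ Submodule.span K (Set.range ν) ∧
      LinearIndependent K ![v, w] ∧ ⁅v, w⁆ = 0 ∧
      ∃ z ∈ Submodule.span K {x | ∃ i j : V, G.Adj i j ∧ x = ⁅ν i, ν j⁆},
        z ∉ Submodule.span K
          ({u | ∃ x : L, u = ⁅v, x⁆} ∪ {u | ∃ x : L, u = ⁅w, x⁆}) := by
  obtain ⟨a, b, i, j, hab, hnab, hijlt, hadjij, hia, hib, hja, hjb⟩ :=
    graph_aux G h5 hnc hiso
  set f := Sum.elim ν (fun p : {p : V × V // p.1 < p.2 ∧ G.Adj p.1 p.2} =>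
    ⁅ν p.1.1, ν p.1.2⁆) with hf
  set q : {p : V × V // p.1 < p.2 ∧ G.Adj p.1 p.2} := ⟨(i, j), hijlt, hadjij⟩ with hq
  -- linear independence of the pair
  have hpair : LinearIndependent K ![ν a, ν b] := by
    have hinj : Function.Injective (![Sum.inl a, Sum.inl b] :
        Fin 2 → V ⊕ {p : V × V // p.1 < p.2 ∧ G.Adj p.1 p.2}) := by
      intro x y hxy
      fin_cases x <;> fin_cases y <;> simp_all [hab, hab.symm]
    have h2 := hind.comp _ hinj
    have heq : (f ∘ ![Sum.inl a, Sum.inl b]) = ![ν a, ν b] := by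
      funext x; fin_cases x <;> rfl
    rwa [heq] at h2
  -- the key containment lemma
  have key : ∀ c : V, c ≠ i → c ≠ j → ∀ x : L,
      ⁅ν c, x⁆ ∈ Submodule.span K (f '' {Sum.inr q}ᶜ) := by
    intro c hci hcj x
    have hx : x ∈ Submodule.span K (Set.range f) := by rw [hspan]; trivial
    induction hx using Submodule.span_induction with
    | mem y hy =>
      obtain ⟨t, rfl⟩ := hy
      cases t with
      | inl k =>
        by_cases hck : G.Adj c k
        · have hcne : c ≠ k := G.ne_of_adj hck
          rcases lt_or_gt_of_ne hcne with hlt | hgt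
          · have : ⁅ν c, f (Sum.inl k)⁆ = f (Sum.inr ⟨(c, k), hlt, hck⟩) := rfl
            rw [this]
            apply Submodule.subset_span
            refine ⟨Sum.inr ⟨(c, k), hlt, hck⟩, ?_, rfl⟩
            simp only [Set.mem_compl_iff, Set.mem_singleton_iff]
            intro h
            apply hci
            have := Sum.inr.inj h
            have hfst := congrArg (fun r => r.1.1) this
            exact hfst
          · have : ⁅ν c, f (Sum.inl k)⁆ = -f (Sum.inr ⟨(k, c), hgt, hck.symm⟩) := by
              simp only [hf, Sum.elim_inl, Sum.elim_inr]
              rw [← lie_skew]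
            rw [this]
            apply neg_mem
            apply Submodule.subset_span
            refine ⟨Sum.inr ⟨(k, c), hgt, hck.symm⟩, ?_, rfl⟩
            simp only [Set.mem_compl_iff, Set.mem_singleton_iff]
            intro h
            apply hcj
            have := Sum.inr.inj h
            exact congrArg (fun r => r.1.2) this
        · have : ⁅ν c, f (Sum.inl k)⁆ = 0 := hnadj c k hck
          rw [this]; exact zero_mem _
      | inr p =>
        have : ⁅ν c, f (Sum.inr p)⁆ = 0 := by
          have h0 := hcent p.1.1 p.1.2 p.2.2 (ν c)
          simp only [hf, Sum.elim_inr]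
          rw [← lie_skew, h0, neg_zero]
        rw [this]; exact zero_mem _
    | zero => rw [lie_zero]; exact zero_mem _
    | add y z _ _ hy hz => rw [lie_add]; exact add_mem hy hz
    | smul t y _ hy => rw [lie_smul]; exact Submodule.smul_mem _ _ hy
  refine ⟨ν a, ν b, Submodule.subset_span ⟨a, rfl⟩, Submodule.subset_span ⟨b, rfl⟩,
    hpair, hnadj a b hnab, ⁅ν i, ν j⁆,
    Submodule.subset_span ⟨i, j, hadjij, rfl⟩, ?_⟩
  intro hmem
  have hle : Submodule.span K
      ({u | ∃ x : L, u = ⁅ν a, x⁆} ∪ {u | ∃ x : L, u = ⁅ν b, x⁆}) ≤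
      Submodule.span K (f '' {Sum.inr q}ᶜ) := by
    rw [Submodule.span_le]
    rintro u (⟨x, rfl⟩ | ⟨x, rfl⟩)
    · exact key a (Ne.symm hia) (Ne.symm hja) x
    · exact key b (Ne.symm hib) (Ne.symm hjb) x
  have hnm : f (Sum.inr q) ∉ Submodule.span K (f '' {Sum.inr q}ᶜ) :=
    hind.notMem_span_image (by simp)
  exact hnm (hle hmem)
end

section
/- Let g be the 2-step nilpotent Lie algebra of the 4-cycle graph (basis v_1,...,v_4, z_{12}, z_{23}, z_{34}, z_{41} with cycle brackets as above). Then for every pair of linearly independent elements v, w ∈ span{v_1, v_2, v_3, v_4} with [v, w] = 0, the span of [v, g] ∪ [w, g] equals the whole center span{z_{12}, z_{23}, z_{34}, z_{41}}. -/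
/-- In the 2-step nilpotent Lie algebra of the 4-cycle graph, for any pair of linearly
independent commuting elements `v, w` of `span{v₁,…,v₄}`, the span of `⁅v,g⁆ ∪ ⁅w,g⁆`
is the whole center `span{z₁₂, z₂₃, z₃₄, z₄₁}`. -/
theorem four_cycle_brackets_span_center
    {K L : Type*} [Field K] [CharZero K] [LieRing L] [LieAlgebra K L]
    (v₁ v₂ v₃ v₄ z₁₂ z₂₃ z₃₄ z₄₁ : L)
    (hind : LinearIndependent K ![v₁, v₂, v₃, v₄, z₁₂, z₂₃, z₃₄, z₄₁])
    (hspan : Submodule.span K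
      (Set.range ![v₁, v₂, v₃, v₄, z₁₂, z₂₃, z₃₄, z₄₁]) = ⊤)
    (h12 : ⁅v₁, v₂⁆ = z₁₂) (h23 : ⁅v₂, v₃⁆ = z₂₃)
    (h34 : ⁅v₃, v₄⁆ = z₃₄) (h41 : ⁅v₄, v₁⁆ = z₄₁)
    (h13 : ⁅v₁, v₃⁆ = 0) (h24 : ⁅v₂, v₄⁆ = 0)
    (hcent : ∀ x : L, ⁅z₁₂, x⁆ = 0 ∧ ⁅z₂₃, x⁆ = 0 ∧ ⁅z₃₄, x⁆ = 0 ∧ ⁅z₄₁, x⁆ = 0) :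
    ∀ v w : L, v ∈ Submodule.span K ({v₁, v₂, v₃, v₄} : Set L) →
      w ∈ Submodule.span K ({v₁, v₂, v₃, v₄} : Set L) →
      LinearIndependent K ![v, w] → ⁅v, w⁆ = 0 →
      Submodule.span K ({u | ∃ x : L, u = ⁅v, x⁆} ∪ {u | ∃ x : L, u = ⁅w, x⁆}) =
        Submodule.span K ({z₁₂, z₂₃, z₃₄, z₄₁} : Set L) := by
  intro v w hv hw hvw hbr
  -- skew-symmetric versions of the bracket relations
  have h21 : ⁅v₂, v₁⁆ = -z₁₂ := by rw [← lie_skew, h12]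
  have h32 : ⁅v₃, v₂⁆ = -z₂₃ := by rw [← lie_skew, h23]
  have h43 : ⁅v₄, v₃⁆ = -z₃₄ := by rw [← lie_skew, h34]
  have h14 : ⁅v₁, v₄⁆ = -z₄₁ := by rw [← lie_skew, h41]
  have h31 : ⁅v₃, v₁⁆ = 0 := by rw [← lie_skew, h13, neg_zero]
  have h42 : ⁅v₄, v₂⁆ = 0 := by rw [← lie_skew, h24, neg_zero]
  -- extract coefficients of v and w
  obtain ⟨a1, p, hp, hv1⟩ := Submodule.mem_span_insert.mp hv
  obtain ⟨a2, q, hq, rfl⟩ := Submodule.mem_span_insert.mp hp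
  obtain ⟨a3, r, hr, rfl⟩ := Submodule.mem_span_insert.mp hq
  obtain ⟨a4, rfl⟩ := Submodule.mem_span_singleton.mp hr
  obtain ⟨b1, p', hp', hw1⟩ := Submodule.mem_span_insert.mp hw
  obtain ⟨b2, q', hq', rfl⟩ := Submodule.mem_span_insert.mp hp'
  obtain ⟨b3, r', hr', rfl⟩ := Submodule.mem_span_insert.mp hq'
  obtain ⟨b4, rfl⟩ := Submodule.mem_span_singleton.mp hr'
  -- generic bracket computations
  have key : ∀ c1 c2 c3 c4 : K,
      ⁅c1 • v₁ + (c2 • v₂ + (c3 • v₃ + c4 • v₄)), v₁⁆ = c4 • z₄₁ - c2 • z₁₂ ∧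
      ⁅c1 • v₁ + (c2 • v₂ + (c3 • v₃ + c4 • v₄)), v₂⁆ = c1 • z₁₂ - c3 • z₂₃ ∧
      ⁅c1 • v₁ + (c2 • v₂ + (c3 • v₃ + c4 • v₄)), v₃⁆ = c2 • z₂₃ - c4 • z₃₄ ∧
      ⁅c1 • v₁ + (c2 • v₂ + (c3 • v₃ + c4 • v₄)), v₄⁆ = c3 • z₃₄ - c1 • z₄₁ := by
    intro c1 c2 c3 c4
    refine ⟨?_, ?_, ?_, ?_⟩ <;>
      · simp only [add_lie, smul_lie, h12, h21, h23, h32, h34, h43, h41, h14,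
          h13, h31, h24, h42, lie_self, smul_zero, smul_neg, zero_add, add_zero]
        module
  obtain ⟨bv1, bv2, bv3, bv4⟩ := key a1 a2 a3 a4
  obtain ⟨bw1, bw2, bw3, bw4⟩ := key b1 b2 b3 b4
  rw [← hv1] at bv1 bv2 bv3 bv4
  rw [← hw1] at bw1 bw2 bw3 bw4
  -- the bracket [v,w]
  have bvw : ⁅v, w⁆ = (a1*b2 - a2*b1) • z₁₂ + (a2*b3 - a3*b2) • z₂₃ +
      (a3*b4 - a4*b3) • z₃₄ + (a4*b1 - a1*b4) • z₄₁ := by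
    rw [hw1, lie_add, lie_add, lie_add, lie_smul, lie_smul, lie_smul, lie_smul,
      bv1, bv2, bv3, bv4]
    module
  -- linear independence of the z's
  have hz : LinearIndependent K ![z₁₂, z₂₃, z₃₄, z₄₁] := by
    have hf : LinearIndependent K
        (![v₁, v₂, v₃, v₄, z₁₂, z₂₃, z₃₄, z₄₁] ∘ fun i : Fin 4 => (⟨i.1 + 4, by omega⟩ : Fin 8)) :=
      hind.comp _ (fun i j hij => by
        have : i.1 + 4 = j.1 + 4 := congrArg Fin.val hij
        exact Fin.ext (by omega))
    have he : ![z₁₂, z₂₃, z₃₄, z₄₁] =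
        ![v₁, v₂, v₃, v₄, z₁₂, z₂₃, z₃₄, z₄₁] ∘ fun i : Fin 4 => (⟨i.1 + 4, by omega⟩ : Fin 8) := by
      funext i; fin_cases i <;> rfl
    rw [he]; exact hf
  have hzc : ∀ c1 c2 c3 c4 : K, c1 • z₁₂ + c2 • z₂₃ + c3 • z₃₄ + c4 • z₄₁ = 0 →
      c1 = 0 ∧ c2 = 0 ∧ c3 = 0 ∧ c4 = 0 := by
    intro c1 c2 c3 c4 h
    have := Fintype.linearIndependent_iff.mp hz ![c1, c2, c3, c4]
      (by simpa [Fin.sum_univ_four, add_assoc] using h)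
    exact ⟨this 0, this 1, this 2, this 3⟩
  -- the cyclic minors vanish
  obtain ⟨m12, m23, m34, m41⟩ := hzc _ _ _ _ (bvw ▸ hbr)
  rw [sub_eq_zero] at m12 m23 m34 m41
  -- linear independence of v, w
  have hcontra : ∀ c d : K, c • v + d • w = 0 → c = 0 ∧ d = 0 := by
    intro c d h
    have := Fintype.linearIndependent_iff.mp hvw ![c, d]
      (by simpa [Fin.sum_univ_two] using h)
    exact ⟨this 0, this 1⟩
  set S := Submodule.span K ({u | ∃ x : L, u = ⁅v, x⁆} ∪ {u | ∃ x : L, u = ⁅w, x⁆})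
    with hS
  set Z := Submodule.span K ({z₁₂, z₂₃, z₃₄, z₄₁} : Set L) with hZdef
  have hz12Z : z₁₂ ∈ Z := Submodule.subset_span (by simp)
  have hz23Z : z₂₃ ∈ Z := Submodule.subset_span (by simp)
  have hz34Z : z₃₄ ∈ Z := Submodule.subset_span (by simp)
  have hz41Z : z₄₁ ∈ Z := Submodule.subset_span (by simp)
  have hvS : ∀ x : L, ⁅v, x⁆ ∈ S := fun x => Submodule.subset_span (Or.inl ⟨x, rfl⟩)
  have hwS : ∀ x : L, ⁅w, x⁆ ∈ S := fun x => Submodule.subset_span (Or.inr ⟨x, rfl⟩)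
  refine le_antisymm ?_ ?_
  · -- forward inclusion: every bracket lies in the centre
    have main : ∀ u : L, u ∈ Submodule.span K ({v₁, v₂, v₃, v₄} : Set L) →
        ∀ x : L, ⁅u, x⁆ ∈ Z := by
      intro u hu x
      have hx : x ∈ Submodule.span K (Set.range ![v₁, v₂, v₃, v₄, z₁₂, z₂₃, z₃₄, z₄₁]) := by
        rw [hspan]; exact Submodule.mem_top
      induction hx using Submodule.span_induction with
      | mem y hy =>
        obtain ⟨c1, s, hs, hu1⟩ := Submodule.mem_span_insert.mp hu
        obtain ⟨c2, t, ht, rfl⟩ := Submodule.mem_span_insert.mp hs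
        obtain ⟨c3, t', ht', rfl⟩ := Submodule.mem_span_insert.mp ht
        obtain ⟨c4, rfl⟩ := Submodule.mem_span_singleton.mp ht'
        obtain ⟨k1, k2, k3, k4⟩ := key c1 c2 c3 c4
        obtain ⟨i, rfl⟩ := hy
        have hc : ⁅u, z₁₂⁆ ∈ Z ∧ ⁅u, z₂₃⁆ ∈ Z ∧ ⁅u, z₃₄⁆ ∈ Z ∧ ⁅u, z₄₁⁆ ∈ Z := by
          obtain ⟨e1, e2, e3, e4⟩ := hcent u
          refine ⟨?_, ?_, ?_, ?_⟩ <;>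
            · rw [← lie_skew]
              simp only [e1, e2, e3, e4, neg_zero]
              exact Submodule.zero_mem Z
        fin_cases i
        · show ⁅u, v₁⁆ ∈ Z
          rw [hu1, k1]; exact sub_mem (Submodule.smul_mem _ _ hz41Z) (Submodule.smul_mem _ _ hz12Z)
        · show ⁅u, v₂⁆ ∈ Z
          rw [hu1, k2]; exact sub_mem (Submodule.smul_mem _ _ hz12Z) (Submodule.smul_mem _ _ hz23Z)
        · show ⁅u, v₃⁆ ∈ Z
          rw [hu1, k3]; exact sub_mem (Submodule.smul_mem _ _ hz23Z) (Submodule.smul_mem _ _ hz34Z)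
        · show ⁅u, v₄⁆ ∈ Z
          rw [hu1, k4]; exact sub_mem (Submodule.smul_mem _ _ hz34Z) (Submodule.smul_mem _ _ hz41Z)
        · exact hc.1
        · exact hc.2.1
        · exact hc.2.2.1
        · exact hc.2.2.2
      | zero => simp only [lie_zero]; exact Submodule.zero_mem Z
      | add y z _ _ hy hz => rw [lie_add]; exact add_mem hy hz
      | smul c y _ hy => rw [lie_smul]; exact Submodule.smul_mem _ _ hy
    refine Submodule.span_le.mpr ?_
    rintro u (⟨x, rfl⟩ | ⟨x, rfl⟩)
    · exact main v hv x
    · exact main w hw x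
  · -- reverse inclusion
    refine Submodule.span_le.mpr ?_
    by_cases hm13 : a1 * b3 - a3 * b1 ≠ 0
    · -- use the minor m13
      have e12 : b3 • ⁅v, v₂⁆ - a3 • ⁅w, v₂⁆ = (a1*b3 - a3*b1) • z₁₂ := by
        rw [bv2, bw2]; module
      have e23 : b1 • ⁅v, v₂⁆ - a1 • ⁅w, v₂⁆ = (a1*b3 - a3*b1) • z₂₃ := by
        rw [bv2, bw2]; module
      have e34 : a1 • ⁅w, v₄⁆ - b1 • ⁅v, v₄⁆ = (a1*b3 - a3*b1) • z₃₄ := by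
        rw [bv4, bw4]; module
      have e41 : a3 • ⁅w, v₄⁆ - b3 • ⁅v, v₄⁆ = (a1*b3 - a3*b1) • z₄₁ := by
        rw [bv4, bw4]; module
      have mem : ∀ z : L, ∀ u : L, u ∈ S → u = (a1*b3 - a3*b1) • z → z ∈ S := by
        intro z u hu he
        have : z = (a1*b3 - a3*b1)⁻¹ • u := by
          rw [he, smul_smul, inv_mul_cancel₀ hm13, one_smul]
        rw [this]; exact Submodule.smul_mem _ _ hu
      rintro z (rfl | rfl | rfl | rfl)
      · exact mem _ _ (sub_mem (Submodule.smul_mem _ _ (hvS v₂)) (Submodule.smul_mem _ _ (hwS v₂))) e12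
      · exact mem _ _ (sub_mem (Submodule.smul_mem _ _ (hvS v₂)) (Submodule.smul_mem _ _ (hwS v₂))) e23
      · exact mem _ _ (sub_mem (Submodule.smul_mem _ _ (hwS v₄)) (Submodule.smul_mem _ _ (hvS v₄))) e34
      · exact mem _ _ (sub_mem (Submodule.smul_mem _ _ (hwS v₄)) (Submodule.smul_mem _ _ (hvS v₄))) e41
    · push_neg at hm13
      rw [sub_eq_zero] at hm13
      by_cases hm24 : a2 * b4 - a4 * b2 ≠ 0
      · have e12 : a4 • ⁅w, v₁⁆ - b4 • ⁅v, v₁⁆ = (a2*b4 - a4*b2) • z₁₂ := by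
          rw [bv1, bw1]; module
        have e23 : b4 • ⁅v, v₃⁆ - a4 • ⁅w, v₃⁆ = (a2*b4 - a4*b2) • z₂₃ := by
          rw [bv3, bw3]; module
        have e34 : b2 • ⁅v, v₃⁆ - a2 • ⁅w, v₃⁆ = (a2*b4 - a4*b2) • z₃₄ := by
          rw [bv3, bw3]; module
        have e41 : a2 • ⁅w, v₁⁆ - b2 • ⁅v, v₁⁆ = (a2*b4 - a4*b2) • z₄₁ := by
          rw [bv1, bw1]; module
        have mem : ∀ z : L, ∀ u : L, u ∈ S → u = (a2*b4 - a4*b2) • z → z ∈ S := by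
          intro z u hu he
          have : z = (a2*b4 - a4*b2)⁻¹ • u := by
            rw [he, smul_smul, inv_mul_cancel₀ hm24, one_smul]
          rw [this]; exact Submodule.smul_mem _ _ hu
        rintro z (rfl | rfl | rfl | rfl)
        · exact mem _ _ (sub_mem (Submodule.smul_mem _ _ (hwS v₁)) (Submodule.smul_mem _ _ (hvS v₁))) e12
        · exact mem _ _ (sub_mem (Submodule.smul_mem _ _ (hvS v₃)) (Submodule.smul_mem _ _ (hwS v₃))) e23
        · exact mem _ _ (sub_mem (Submodule.smul_mem _ _ (hvS v₃)) (Submodule.smul_mem _ _ (hwS v₃))) e34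
        · exact mem _ _ (sub_mem (Submodule.smul_mem _ _ (hwS v₁)) (Submodule.smul_mem _ _ (hvS v₁))) e41
      · -- all minors vanish: v, w would be dependent, contradiction
        exfalso
        push_neg at hm24
        rw [sub_eq_zero] at hm24
        have dep : ∀ bk ak : K,
            (∀ c1 c2 c3 c4 : K, bk * c1 = ak * c1 → True) → -- dummy
            bk • v - ak • w = (bk*a1 - ak*b1) • v₁ + ((bk*a2 - ak*b2) • v₂ +
              ((bk*a3 - ak*b3) • v₃ + (bk*a4 - ak*b4) • v₄)) := by
          intro bk ak _
          rw [hv1, hw1]; module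
        have zero_of : ∀ bk ak : K, bk*a1 - ak*b1 = 0 → bk*a2 - ak*b2 = 0 →
            bk*a3 - ak*b3 = 0 → bk*a4 - ak*b4 = 0 → ak = 0 := by
          intro bk ak e1 e2 e3 e4
          have h0 : bk • v + (-ak) • w = 0 := by
            have := dep bk ak (fun _ _ _ _ _ => trivial)
            rw [neg_smul, ← sub_eq_add_neg, this, e1, e2, e3, e4]
            simp
          exact neg_eq_zero.mp ((hcontra _ _ h0).2)
        have ha1 : a1 = 0 := zero_of b1 a1 (by ring) (by linear_combination -m12)
          (by linear_combination -hm13) (by linear_combination m41)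
        have ha2 : a2 = 0 := zero_of b2 a2 (by linear_combination m12)
          (by ring) (by linear_combination -m23) (by linear_combination -hm24)
        have ha3 : a3 = 0 := zero_of b3 a3 (by linear_combination hm13)
          (by linear_combination m23) (by ring) (by linear_combination -m34)
        have ha4 : a4 = 0 := zero_of b4 a4 (by linear_combination -m41)
          (by linear_combination hm24) (by linear_combination m34) (by ring)
        have hv0 : v = 0 := by
          rw [hv1, ha1, ha2, ha3, ha4]; simp
        have := (hcontra 1 0 (by rw [hv0]; simp)).1
        exact one_ne_zero this
end
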